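/- arXiv:1602.01749 — 3 statements merged into one kernel-verified Lean document; each statement's English description precedes it below -/
import Mathlib

section
/- Let G be a finite subgroup of PGL₂(ℚ) such that 𝒪 = {O₁, …, O_k} is finite and nonempty; its orbits consist of algebraic numbers. For each i choose α_i ∈ O_i and let p_i ∈ ℤ[x] be the minimal polynomial of α_i over ℚ. Let K be an algebraic number field with its places v normalized so that ∏_v |α|_v = 1 for every α ∈ K^× and ∏_{v archimedean} |α|_v = |N_{K/ℚ}(α)|, and set n_v = 0 if v is non-Archimedean, n_v = 1 if v is real, and n_v = 2 if v is complex. Then there exists B_max > 0 such that for every B with 0 < B < B_max there exists D > 0 with the following property: for every place v of K and every α ∈ K such that for all σ ∈ G the value σ(α) lies in K, is nonzero, and is not a root of any p_i, one has Σ_{σ∈G} ( log⁺|σ(α)|_v − (1/2)·log|σ(α)|_v − B·Σ_{i=1}^k log|p_i(σ(α))|_v ) ≥ n_v·D, where log⁺ t = log max(t, 1). -/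
/- For a nonzero `f ∈ ℤ[X]`, the Mahler measure `M(f) = |a_n| ∏ max(|α_i|,1)`. -/
open Polynomial

noncomputable def mahlerMeasure (f : ℤ[X]) : ℝ :=
  |(f.leadingCoeff : ℝ)| *
    (((f.map (Int.castRingHom ℂ)).roots).map (fun z => max ‖z‖ 1)).prod

/-- The primitive minimal polynomial over `ℤ` of an algebraic number. -/
noncomputable def intMinpoly (α : ℂ) : ℤ[X] :=
  (IsLocalization.integerNormalization (nonZeroDivisors ℤ) (minpoly ℚ α)).primPart

/-- The absolute logarithmic Weil height `h(α) = (1/n) log M(f)`. -/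
noncomputable def height (α : ℂ) : ℝ :=
  Real.log (mahlerMeasure (intMinpoly α)) / (minpoly ℚ α).natDegree

/-- `PGL₂(ℚ)`. -/
abbrev PGL2 : Type := GL (Fin 2) ℚ ⧸ Subgroup.center (GL (Fin 2) ℚ)

/-- The Möbius transformation of `ℂ ∪ {∞}` attached to a rational matrix `(a b; c d)`,
`z ↦ (az+b)/(cz+d)`. -/
noncomputable def mobius (m : Matrix (Fin 2) (Fin 2) ℚ) (x : OnePoint ℂ) : OnePoint ℂ :=
  Option.elim x
    (if (m 1 0 : ℂ) = 0 then OnePoint.infty else (((m 0 0 : ℚ) : ℂ) / ((m 1 0 : ℚ) : ℂ) : ℂ))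
    (fun z => if ((m 1 0 : ℚ) : ℂ) * z + ((m 1 1 : ℚ) : ℂ) = 0 then OnePoint.infty
      else ((((m 0 0 : ℚ) : ℂ) * z + ((m 0 1 : ℚ) : ℂ)) / (((m 1 0 : ℚ) : ℂ) * z + ((m 1 1 : ℚ) : ℂ)) : ℂ))

/-- The action of `σ ∈ PGL₂(ℚ)` on `ℂ ∪ {∞}` (via a representative matrix; the result
does not depend on this choice). -/
noncomputable def pglApply (σ : PGL2) (x : OnePoint ℂ) : OnePoint ℂ :=
  mobius (σ.out : Matrix (Fin 2) (Fin 2) ℚ) x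

/-- The Weil height on `ℂ ∪ {∞}`, with `h(∞) = 0`. -/
noncomputable def heightOP (x : OnePoint ℂ) : ℝ := Option.elim x 0 height

/-- The `G`-orbit height `h_G(x) = ∑_{σ ∈ G} h(σ x)`. -/
noncomputable def hOrbit (G : Subgroup PGL2) (x : OnePoint ℂ) : ℝ :=
  ∑ᶠ σ ∈ (G : Set PGL2), heightOP (pglApply σ x)

/-- The orbit of `x ∈ ℂ ∪ {∞}` under `G`. -/
def pglOrbit (G : Subgroup PGL2) (x : OnePoint ℂ) : Set (OnePoint ℂ) :=
  {y | ∃ σ ∈ G, pglApply σ x = y}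

/-- The set `𝒪` of orbits of `G` on `ℂ ∪ {∞}` all of whose elements are `0` or lie on
the unit circle. -/
def goodOrbits (G : Subgroup PGL2) : Set (Set (OnePoint ℂ)) :=
  {O | (∃ x : OnePoint ℂ, O = pglOrbit G x) ∧
      ∀ y ∈ O, y = ((0 : ℂ) : OnePoint ℂ) ∨ ∃ z : ℂ, y = (z : OnePoint ℂ) ∧ ‖z‖ = 1}

open IsDedekindDomain NumberField

/-- The places of a number field `K`: finite places (indexed by the height-one spectrum of
the ring of integers) and infinite places. -/
def Place (K : Type*) [Field K] [NumberField K] : Type _ :=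
  HeightOneSpectrum (𝓞 K) ⊕ InfinitePlace K

/-- The normalized `v`-adic absolute value attached to a finite place, with
`|π|_v = N(v)^{-1}` for a uniformizer `π`; with this normalization the product of `|α|_v`
over all places is `1` for `α ≠ 0`. -/
noncomputable def finitePlaceAbs {K : Type*} [Field K] [NumberField K]
    (v : HeightOneSpectrum (𝓞 K)) (x : K) : ℝ :=
  letI := Classical.decEq K
  if hx : x = 0 then 0
  else (Ideal.absNorm v.asIdeal : ℝ) ^
    (Multiplicative.toAdd (WithZero.unzero ((Valuation.ne_zero_iff (v.valuation K)).mpr hx)))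

/-- The normalized absolute value `|·|_v` at a place `v`; at an infinite place `w` it is
`|ι(·)|^{n_v}` for the corresponding embedding `ι`, so that the product of `|α|_v` over the
archimedean places is `|N_{K/ℚ}(α)|`. -/
noncomputable def placeAbs {K : Type*} [Field K] [NumberField K] (v : Place K) (x : K) : ℝ :=
  Sum.elim (fun w => finitePlaceAbs w x) (fun w => (w x) ^ w.mult) v

/-- The local degree datum `n_v`: `0` at a non-Archimedean place, `1` at a real place and
`2` at a complex place. -/
noncomputable def placeN {K : Type*} [Field K] [NumberField K] (v : Place K) : ℕ :=
  Sum.elim (fun _ => 0) (fun w => w.mult) v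

/-- `σ(x)` for `σ ∈ PGL₂(ℚ)` and `x` in a field `K` of characteristic zero (via a
representative matrix of `σ`). -/
noncomputable def pglApplyField {K : Type*} [Field K] [Algebra ℚ K] (σ : PGL2) (x : K) : K :=
  (algebraMap ℚ K ((σ.out : Matrix (Fin 2) (Fin 2) ℚ) 0 0) * x +
    algebraMap ℚ K ((σ.out : Matrix (Fin 2) (Fin 2) ℚ) 0 1)) /
  (algebraMap ℚ K ((σ.out : Matrix (Fin 2) (Fin 2) ℚ) 1 0) * x +
    algebraMap ℚ K ((σ.out : Matrix (Fin 2) (Fin 2) ℚ) 1 1))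

/-- `σ(x)` lies in `K` (rather than being `∞`), i.e. the denominator `cx + d` does not
vanish. -/
noncomputable def pglDefinedField {K : Type*} [Field K] [Algebra ℚ K] (σ : PGL2) (x : K) :
    Prop :=
  algebraMap ℚ K ((σ.out : Matrix (Fin 2) (Fin 2) ℚ) 1 0) * x +
    algebraMap ℚ K ((σ.out : Matrix (Fin 2) (Fin 2) ℚ) 1 1) ≠ 0


/-! ### Auxiliary lemmas -/

/-! Batch 1 -/

lemma half_abs_log {t : ℝ} (ht : 0 < t) :
    Real.log (max t 1) - (1/2) * Real.log t = (1/2) * |Real.log t| := by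
  rcases le_total 1 t with h | h
  · rw [max_eq_left h, abs_of_nonneg (Real.log_nonneg h)]; ring
  · rw [max_eq_right h, Real.log_one, abs_of_nonpos (Real.log_nonpos ht.le h)]; ring

noncomputable def polyC (p : ℤ[X]) : ℝ :=
  max (∑ j ∈ Finset.range (p.natDegree+1), |((p.coeff j : ℤ) : ℝ)|) 1

lemma one_le_polyC (p : ℤ[X]) : 1 ≤ polyC p := le_max_right _ _

lemma norm_aeval_le (p : ℤ[X]) (y : ℂ) :
    ‖(aeval y p : ℂ)‖ ≤ polyC p * max ‖y‖ 1 ^ p.natDegree := by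
  have h1 : (1:ℝ) ≤ max ‖y‖ 1 := le_max_right _ _
  rw [Polynomial.aeval_eq_sum_range]
  refine le_trans (norm_sum_le _ _) ?_
  have : ∀ j ∈ Finset.range (p.natDegree+1),
      ‖p.coeff j • y ^ j‖ ≤ |((p.coeff j : ℤ) : ℝ)| * max ‖y‖ 1 ^ p.natDegree := by
    intro j hj
    rw [zsmul_eq_mul, norm_mul, norm_pow]
    have : ‖(↑(p.coeff j) : ℂ)‖ = |((p.coeff j : ℤ) : ℝ)| := by
      rw [Complex.norm_intCast]
    rw [this]
    refine mul_le_mul_of_nonneg_left ?_ (abs_nonneg _)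
    calc ‖y‖ ^ j ≤ max ‖y‖ 1 ^ j :=
          pow_le_pow_left₀ (norm_nonneg _) (le_max_left _ _) j
      _ ≤ max ‖y‖ 1 ^ p.natDegree :=
          pow_le_pow_right₀ h1 (Nat.lt_succ_iff.mp (Finset.mem_range.mp hj))
  refine le_trans (Finset.sum_le_sum this) ?_
  rw [← Finset.sum_mul]
  exact mul_le_mul_of_nonneg_right (le_max_left _ _)
    (pow_nonneg (le_trans zero_le_one h1) _)

lemma log_norm_aeval_le (p : ℤ[X]) (y : ℂ) :
    Real.log ‖(aeval y p : ℂ)‖ ≤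
      Real.log (polyC p) + p.natDegree * Real.log (max ‖y‖ 1) := by
  have h1 : (1:ℝ) ≤ max ‖y‖ 1 := le_max_right _ _
  have hC := one_le_polyC p
  have hrhs : 0 ≤ Real.log (polyC p) + p.natDegree * Real.log (max ‖y‖ 1) := by
    have := Real.log_nonneg hC
    have := Real.log_nonneg h1
    positivity
  rcases eq_or_ne (aeval y p : ℂ) 0 with h | h
  · simpa [h] using hrhs
  · have hpos : (0:ℝ) < ‖(aeval y p : ℂ)‖ := norm_pos_iff.mpr h
    calc Real.log ‖(aeval y p : ℂ)‖
        ≤ Real.log (polyC p * max ‖y‖ 1 ^ p.natDegree) :=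
          Real.log_le_log hpos (norm_aeval_le p y)
      _ = Real.log (polyC p) + p.natDegree * Real.log (max ‖y‖ 1) := by
          rw [Real.log_mul (by linarith) (by positivity), Real.log_pow]

/-! center of GL₂ -/

lemma center_GL2_smul {u : GL (Fin 2) ℚ} (hu : u ∈ Subgroup.center (GL (Fin 2) ℚ)) :
    ∃ a : ℚ, a ≠ 0 ∧ (u : Matrix (Fin 2) (Fin 2) ℚ) = a • (1 : Matrix (Fin 2) (Fin 2) ℚ) := by
  have hc := Subgroup.mem_center_iff.mp hu
  set M : Matrix (Fin 2) (Fin 2) ℚ := (u : Matrix (Fin 2) (Fin 2) ℚ) with hMdef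
  have hE1 : (!![1,1;0,1] : Matrix (Fin 2) (Fin 2) ℚ) * !![1,-1;0,1] = 1 := by
    ext i j; fin_cases i <;> fin_cases j <;> simp [Matrix.mul_apply, Fin.sum_univ_two]
  have hE1' : (!![1,-1;0,1] : Matrix (Fin 2) (Fin 2) ℚ) * !![1,1;0,1] = 1 := by
    ext i j; fin_cases i <;> fin_cases j <;> simp [Matrix.mul_apply, Fin.sum_univ_two]
  have hE2 : (!![1,0;1,1] : Matrix (Fin 2) (Fin 2) ℚ) * !![1,0;-1,1] = 1 := by
    ext i j; fin_cases i <;> fin_cases j <;> simp [Matrix.mul_apply, Fin.sum_univ_two]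
  have hE2' : (!![1,0;-1,1] : Matrix (Fin 2) (Fin 2) ℚ) * !![1,0;1,1] = 1 := by
    ext i j; fin_cases i <;> fin_cases j <;> simp [Matrix.mul_apply, Fin.sum_univ_two]
  set E1 : GL (Fin 2) ℚ := ⟨!![1,1;0,1], !![1,-1;0,1], hE1, hE1'⟩ with hE1def
  set E2 : GL (Fin 2) ℚ := ⟨!![1,0;1,1], !![1,0;-1,1], hE2, hE2'⟩ with hE2def
  have h1 : !![1,1;0,1] * M = M * !![1,1;0,1] := congrArg Units.val (hc E1)
  have h2 : !![1,0;1,1] * M = M * !![1,0;1,1] := congrArg Units.val (hc E2)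
  have e100 := congrFun (congrFun h1 0) 0
  have e101 := congrFun (congrFun h1 0) 1
  have e200 := congrFun (congrFun h2 0) 0
  simp [Matrix.mul_apply, Fin.sum_univ_two] at e100 e101 e200
  have hdet : M.det ≠ 0 := by
    have : IsUnit M.det := (Matrix.isUnit_iff_isUnit_det M).mp ⟨u, rfl⟩
    exact this.ne_zero
  rw [Matrix.det_fin_two] at hdet
  refine ⟨M 0 0, ?_, ?_⟩
  · intro h
    apply hdet
    have h11 : M 1 1 = 0 := by linarith
    rw [h, h11, e200, e100]; ring
  · ext i j
    fin_cases i <;> fin_cases j <;>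
      simp [Matrix.smul_apply, Matrix.one_apply, e100, e200]
    linarith

lemma pgl_one_out_scalar :
    ∃ a : ℚ, a ≠ 0 ∧ ((1 : PGL2).out : Matrix (Fin 2) (Fin 2) ℚ)
      = a • (1 : Matrix (Fin 2) (Fin 2) ℚ) := by
  apply center_GL2_smul
  rw [← QuotientGroup.eq_one_iff]
  exact Quotient.out_eq (1 : PGL2)

lemma pglDefinedField_one {F : Type*} [Field F] [Algebra ℚ F] (x : F) :
    pglDefinedField (1 : PGL2) x ∧ pglApplyField (1 : PGL2) x = x := by
  obtain ⟨a, ha, hM⟩ := pgl_one_out_scalar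
  haveI : CharZero F := charZero_of_injective_algebraMap (algebraMap ℚ F).injective
  have ha' : (a : F) ≠ 0 := Rat.cast_ne_zero.mpr ha
  rw [pglDefinedField, pglApplyField, hM]
  simp only [Matrix.smul_apply, Matrix.one_apply, smul_eq_mul]
  norm_num
  refine ⟨ha, ?_⟩
  field_simp


namespace NonarchAux

variable {K : Type*} [Field K] [NumberField K] (v : HeightOneSpectrum (𝓞 K))

lemma absNorm_one_le : (1:ℝ) ≤ (Ideal.absNorm v.asIdeal : ℝ) := by
  have h : Ideal.absNorm v.asIdeal ≠ 0 := by
    rw [ne_eq, Ideal.absNorm_eq_zero_iff]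
    exact v.ne_bot
  exact_mod_cast Nat.one_le_iff_ne_zero.mpr h

lemma fabs_eq {x : K} (hx : x ≠ 0) (u : Multiplicative ℤ) (h : (v.valuation K) x = (u : WithZero (Multiplicative ℤ))) :
    finitePlaceAbs v x = (Ideal.absNorm v.asIdeal : ℝ) ^ (Multiplicative.toAdd u) := by
  rw [finitePlaceAbs, dif_neg hx]
  congr 1
  have : WithZero.unzero ((Valuation.ne_zero_iff (v.valuation K)).mpr hx) = u := by
    rw [← WithZero.coe_inj, WithZero.coe_unzero, h]
  rw [this]

lemma fabs_pos {x : K} (hx : x ≠ 0) : 0 < finitePlaceAbs v x := by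
  rw [finitePlaceAbs, dif_neg hx]
  exact zpow_pos (lt_of_lt_of_le one_pos (absNorm_one_le v)) _

lemma fabs_mono {x y : K} (hx : x ≠ 0) (hy : y ≠ 0)
    (h : (v.valuation K) x ≤ (v.valuation K) y) :
    finitePlaceAbs v x ≤ finitePlaceAbs v y := by
  rw [finitePlaceAbs, dif_neg hx, finitePlaceAbs, dif_neg hy]
  apply zpow_le_zpow_right₀ (absNorm_one_le v)
  rw [Multiplicative.toAdd_le, ← WithZero.coe_le_coe, WithZero.coe_unzero, WithZero.coe_unzero]
  exact h

lemma fabs_le_one {x : K} (hx : x ≠ 0) (h : (v.valuation K) x ≤ 1) :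
    finitePlaceAbs v x ≤ 1 := by
  rw [finitePlaceAbs, dif_neg hx]
  apply zpow_le_one_of_nonpos₀ (absNorm_one_le v)
  have : WithZero.unzero ((Valuation.ne_zero_iff (v.valuation K)).mpr hx) ≤ 1 := by
    rw [← WithZero.coe_le_coe, WithZero.coe_unzero, WithZero.coe_one]
    exact h
  simpa using Multiplicative.toAdd_le.mpr this

lemma fabs_pow {x : K} (hx : x ≠ 0) (d : ℕ) :
    finitePlaceAbs v (x ^ d) = finitePlaceAbs v x ^ d := by
  set u := WithZero.unzero ((Valuation.ne_zero_iff (v.valuation K)).mpr hx) with hu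
  have hvx : (v.valuation K) x = (u : WithZero (Multiplicative ℤ)) := (WithZero.coe_unzero _).symm
  have hpow : (v.valuation K) (x ^ d) = ((u ^ d : Multiplicative ℤ) : WithZero (Multiplicative ℤ)) := by
    rw [Valuation.map_pow, hvx, WithZero.coe_pow]
  rw [fabs_eq v (pow_ne_zero d hx) _ hpow, fabs_eq v hx u hvx, toAdd_pow,
    nsmul_eq_mul, mul_comm, zpow_mul, zpow_natCast]

lemma val_aeval_le (p : ℤ[X]) (x : K) :
    (v.valuation K) (aeval x p) ≤ max 1 ((v.valuation K) x) ^ p.natDegree := by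
  rw [Polynomial.aeval_eq_sum_range]
  apply Valuation.map_sum_le
  intro j hj
  have hcoeff : ((p.coeff j : ℤ) • x ^ j) = algebraMap (𝓞 K) K ((p.coeff j : ℤ) : 𝓞 K) * x ^ j := by
    rw [map_intCast, zsmul_eq_mul]
  rw [hcoeff, Valuation.map_mul, Valuation.map_pow]
  calc (v.valuation K) (algebraMap (𝓞 K) K ((p.coeff j : ℤ) : 𝓞 K)) * (v.valuation K) x ^ j
      ≤ 1 * max 1 ((v.valuation K) x) ^ j := by
        refine mul_le_mul' (v.valuation_le_one (K := K) _) (pow_le_pow_left' (le_max_right _ _) j)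
    _ = max 1 ((v.valuation K) x) ^ j := one_mul _
    _ ≤ max 1 ((v.valuation K) x) ^ p.natDegree :=
        pow_le_pow_right' (le_max_left _ _) (Nat.lt_succ_iff.mp (Finset.mem_range.mp hj))

lemma log_fabs_aeval_le (p : ℤ[X]) {x : K} (hx : x ≠ 0) :
    Real.log (finitePlaceAbs v (aeval x p)) ≤
      p.natDegree * Real.log (max (finitePlaceAbs v x) 1) := by
  have hrhs : 0 ≤ (p.natDegree : ℝ) * Real.log (max (finitePlaceAbs v x) 1) := by
    have := Real.log_nonneg (le_max_right (finitePlaceAbs v x) 1)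
    positivity
  rcases eq_or_ne (aeval x p) 0 with h | h
  · rw [h]
    rw [show finitePlaceAbs v (0 : K) = 0 from by rw [finitePlaceAbs]; exact dif_pos rfl]
    rw [Real.log_zero]
    exact hrhs
  · have hval := val_aeval_le v p x
    rcases le_total ((v.valuation K) x) 1 with hv1 | hv1
    · rw [max_eq_left hv1] at hval
      rw [one_pow] at hval
      have := fabs_le_one v h hval
      have hpos := fabs_pos v h
      calc Real.log (finitePlaceAbs v (aeval x p)) ≤ 0 := Real.log_nonpos hpos.le this
        _ ≤ _ := hrhs
    · rw [max_eq_right hv1] at hval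
      have hxd : (v.valuation K) (aeval x p) ≤ (v.valuation K) (x ^ p.natDegree) := by
        rwa [Valuation.map_pow]
      have h2 := fabs_mono v h (pow_ne_zero _ hx) hxd
      rw [fabs_pow v hx] at h2
      calc Real.log (finitePlaceAbs v (aeval x p))
          ≤ Real.log (finitePlaceAbs v x ^ p.natDegree) :=
            Real.log_le_log (fabs_pos v h) h2
        _ = p.natDegree * Real.log (finitePlaceAbs v x) := Real.log_pow _ _
        _ ≤ p.natDegree * Real.log (max (finitePlaceAbs v x) 1) := by
            refine mul_le_mul_of_nonneg_left ?_ (Nat.cast_nonneg _)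
            exact Real.log_le_log (fabs_pos v hx) (le_max_left _ _)

end NonarchAux


/-! Batch 3: intMinpoly root -/

lemma aeval_intMinpoly_self {α : ℂ} (h : IsAlgebraic ℚ α) :
    Polynomial.aeval α (intMinpoly α) = 0 := by
  have h0 : minpoly ℚ α ≠ 0 := minpoly.ne_zero h.isIntegral
  set q := IsLocalization.integerNormalization (nonZeroDivisors ℤ) (minpoly ℚ α) with hqdef
  have hq : aeval α q = 0 :=
    IsLocalization.integerNormalization_aeval_eq_zero _ _ (minpoly.aeval ℚ α)
  have hqne : q ≠ 0 := by
    intro hq0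
    obtain ⟨b, hb⟩ :=
      IsLocalization.integerNormalization_map_to_map (nonZeroDivisors ℤ) (minpoly ℚ α)
    rw [← hqdef, hq0, Polynomial.map_zero] at hb
    have hbne : ((b : ℤ) : ℚ) ≠ 0 := by
      have := nonZeroDivisors.coe_ne_zero b
      exact_mod_cast this
    have : minpoly ℚ α = 0 := by
      have := hb.symm
      rwa [smul_eq_zero, or_iff_right (by exact_mod_cast hbne : ((b : ℤ) : ℤ) ≠ 0)] at this
    exact h0 this
  have hcontent : q.content ≠ 0 := fun hc => hqne (Polynomial.content_eq_zero_iff.mp hc)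
  have hfactor := q.eq_C_content_mul_primPart
  rw [intMinpoly, ← hqdef]
  have : (aeval α) (Polynomial.C q.content * q.primPart) = 0 := by rw [← hfactor]; exact hq
  rw [map_mul, Polynomial.aeval_C] at this
  rcases mul_eq_zero.mp this with h1 | h1
  · rw [algebraMap_int_eq, eq_intCast] at h1
    exact absurd (by exact_mod_cast h1) hcontent
  · exact h1


lemma algQC (q : ℚ) : algebraMap ℚ ℂ q = (q : ℂ) := eq_ratCast _ q

lemma pglApply_coe (σ : PGL2) {w : ℂ} (h : pglDefinedField σ w) :
    pglApply σ (w : OnePoint ℂ) = ((pglApplyField σ w : ℂ) : OnePoint ℂ) := by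
  rw [pglDefinedField, algQC, algQC] at h
  show mobius _ (Option.some w) = _
  unfold mobius
  rw [Option.elim_some, if_neg h, pglApplyField, algQC, algQC, algQC, algQC]

/-- If the denominator of `σ` vanishes at `w`, the numerator does not. -/
lemma num_ne_zero_of_den_eq_zero (σ : PGL2) {w : ℂ}
    (h : algebraMap ℚ ℂ ((σ.out : Matrix (Fin 2) (Fin 2) ℚ) 1 0) * w +
      algebraMap ℚ ℂ ((σ.out : Matrix (Fin 2) (Fin 2) ℚ) 1 1) = 0) :
    algebraMap ℚ ℂ ((σ.out : Matrix (Fin 2) (Fin 2) ℚ) 0 0) * w +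
      algebraMap ℚ ℂ ((σ.out : Matrix (Fin 2) (Fin 2) ℚ) 0 1) ≠ 0 := by
  intro hnum
  set M : Matrix (Fin 2) (Fin 2) ℚ := (σ.out : Matrix (Fin 2) (Fin 2) ℚ) with hM
  have hdet : M.det ≠ 0 := by
    have : IsUnit M.det := (Matrix.isUnit_iff_isUnit_det M).mp ⟨σ.out, rfl⟩
    exact this.ne_zero
  rw [Matrix.det_fin_two] at hdet
  apply hdet
  simp only [algQC] at h hnum
  have hdetC : ((M 0 0 * M 1 1 - M 0 1 * M 1 0 : ℚ) : ℂ) = 0 := by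
    push_cast
    calc ((M 0 0 : ℚ) : ℂ) * (M 1 1 : ℚ) - ((M 0 1 : ℚ) : ℂ) * (M 1 0 : ℚ)
        = ((M 0 0 : ℚ) : ℂ) * (((M 1 0 : ℚ) : ℂ) * w + (M 1 1 : ℚ))
          - (((M 0 0 : ℚ) : ℂ) * w + (M 0 1 : ℚ)) * (M 1 0 : ℚ) := by ring
      _ = 0 := by rw [h, hnum]; ring
  exact_mod_cast hdetC

/-- Continuity of the Möbius action at a point with nonvanishing denominator. -/
lemma tendsto_pglApplyField (σ : PGL2) {w : ℂ} (hw : pglDefinedField σ w)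
    {u : ℕ → ℂ} (hu : Filter.Tendsto u Filter.atTop (nhds w)) :
    Filter.Tendsto (fun n => pglApplyField σ (u n)) Filter.atTop
      (nhds (pglApplyField σ w)) := by
  unfold pglApplyField
  exact Filter.Tendsto.div
    ((hu.const_mul _).add_const _) ((hu.const_mul _).add_const _) hw

lemma tendsto_aeval (p : ℤ[X]) {w : ℂ} {u : ℕ → ℂ} (hu : Filter.Tendsto u Filter.atTop (nhds w)) :
    Filter.Tendsto (fun n => (aeval (u n) p : ℂ)) Filter.atTop (nhds (aeval w p)) := by
  have hc : Continuous (fun y : ℂ => (aeval y p : ℂ)) := by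
    have : (fun y : ℂ => (aeval y p : ℂ)) = fun y => (p.map (algebraMap ℤ ℂ)).eval y := by
      funext y
      rw [Polynomial.eval_map, Polynomial.aeval_def]
    rw [this]
    exact Polynomial.continuous _
  exact (hc.tendsto w).comp hu


/-! Batch 5: orbit classification + compactness claim -/

lemma logplus_le_abs {t : ℝ} (ht : 0 < t) : Real.log (max t 1) ≤ |Real.log t| := by
  rcases le_total 1 t with h | h
  · rw [max_eq_left h]; exact le_abs_self _
  · rw [max_eq_right h, Real.log_one]; exact abs_nonneg _

lemma exists_root_in_orbit (G : Subgroup PGL2) {k : ℕ} (O : Fin k → Set (OnePoint ℂ))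
    (hO : goodOrbits G = Set.range O) (α : Fin k → ℂ)
    (hαmem : ∀ i, (α i : OnePoint ℂ) ∈ O i)
    {w : ℂ} (hdef : ∀ σ ∈ G, pglDefinedField σ w)
    (habs : ∀ σ ∈ G, ‖pglApplyField σ w‖ = 1) :
    ∃ j : Fin k, ∃ σ ∈ G, pglApplyField σ w = α j := by
  have hgood : pglOrbit G (w : OnePoint ℂ) ∈ goodOrbits G := by
    refine ⟨⟨(w : OnePoint ℂ), rfl⟩, ?_⟩
    rintro y ⟨σ, hσ, rfl⟩
    right
    exact ⟨pglApplyField σ w, (pglApply_coe σ (hdef σ hσ)), habs σ hσ⟩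
  rw [hO] at hgood
  obtain ⟨j, hj⟩ := hgood
  have hmem : (α j : OnePoint ℂ) ∈ pglOrbit G (w : OnePoint ℂ) := by
    rw [← hj]; exact hαmem j
  obtain ⟨σ, hσG, hσ⟩ := hmem
  refine ⟨j, σ, hσG, ?_⟩
  rw [pglApply_coe σ (hdef σ hσG)] at hσ
  exact OnePoint.coe_eq_coe.mp hσ

lemma claimStar (G : Subgroup PGL2) (Gf : Finset PGL2) (hGf : ↑Gf = (G : Set PGL2))
    {k : ℕ} (O : Fin k → Set (OnePoint ℂ)) (hO : goodOrbits G = Set.range O)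
    (α : Fin k → ℂ) (hαmem : ∀ i, (α i : OnePoint ℂ) ∈ O i)
    (hαalg : ∀ i, IsAlgebraic ℚ (α i)) :
    ∃ δ : ℝ, 0 < δ ∧ ∃ c : ℝ, 0 < c ∧ ∀ z : ℂ,
      (∀ σ ∈ G, pglDefinedField σ z ∧ pglApplyField σ z ≠ 0 ∧
        ∀ i : Fin k, aeval (pglApplyField σ z) (intMinpoly (α i)) ≠ 0) →
      (∑ σ ∈ Gf, |Real.log ‖pglApplyField σ z‖|) ≤ δ →
      (∑ σ ∈ Gf, ∑ i : Fin k, Real.log ‖(aeval (pglApplyField σ z) (intMinpoly (α i)) : ℂ)‖)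
        ≤ -c := by
  classical
  by_contra hcon
  push_neg at hcon
  have hmem1 : (1 : PGL2) ∈ Gf := by
    rw [← Finset.mem_coe, hGf]; exact G.one_mem
  have hseq : ∀ n : ℕ, ∃ zz : ℂ,
      (∀ σ ∈ G, pglDefinedField σ zz ∧ pglApplyField σ zz ≠ 0 ∧
        ∀ i : Fin k, aeval (pglApplyField σ zz) (intMinpoly (α i)) ≠ 0) ∧
      (∑ σ ∈ Gf, |Real.log ‖pglApplyField σ zz‖|) ≤ 1/(n+1) ∧
      -(1/(n+1) : ℝ) <
        ∑ σ ∈ Gf, ∑ i : Fin k,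
          Real.log ‖(aeval (pglApplyField σ zz) (intMinpoly (α i)) : ℂ)‖ := by
    intro n
    obtain ⟨zz, h1, h2, h3⟩ := hcon (1/(n+1)) (by positivity) (1/(n+1)) (by positivity)
    exact ⟨zz, h1, h2, h3⟩
  choose z hzA hzS hzL using hseq
  have hinv_le_one : ∀ n : ℕ, (1 : ℝ)/(n+1) ≤ 1 := by
    intro n
    rw [div_le_one (by positivity)]
    norm_num
  have hterm : ∀ n : ℕ, ∀ σ ∈ Gf, |Real.log ‖pglApplyField σ (z n)‖| ≤ 1/(n+1) :=
    fun n σ hσ => le_trans (Finset.single_le_sum (f := fun τ => |Real.log ‖pglApplyField τ (z n)‖|)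
      (fun τ _ => abs_nonneg _) hσ) (hzS n)
  have hGmem : ∀ σ ∈ Gf, σ ∈ G := fun σ hσ => by
    rw [← SetLike.mem_coe, ← hGf]; exact hσ
  -- norms of images are bounded by e
  have himg_le : ∀ n : ℕ, ∀ σ ∈ Gf, ‖pglApplyField σ (z n)‖ ≤ Real.exp 1 := by
    intro n σ hσ
    have hne := (hzA n σ (hGmem σ hσ)).2.1
    have h1 : Real.log ‖pglApplyField σ (z n)‖ ≤ 1 :=
      le_trans (le_abs_self _) (le_trans (hterm n σ hσ) (hinv_le_one n))
    calc ‖pglApplyField σ (z n)‖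
        = Real.exp (Real.log ‖pglApplyField σ (z n)‖) :=
          (Real.exp_log (norm_pos_iff.mpr hne)).symm
      _ ≤ Real.exp 1 := Real.exp_le_exp.mpr h1
  have hz_eq : ∀ n : ℕ, pglApplyField (1 : PGL2) (z n) = z n :=
    fun n => (pglDefinedField_one (z n)).2
  have hz_le : ∀ n : ℕ, ‖z n‖ ≤ Real.exp 1 := by
    intro n
    have := himg_le n 1 hmem1
    rwa [hz_eq n] at this
  obtain ⟨w, hwmem, φ, hφmono, hφtend⟩ :=
    (isCompact_closedBall (0:ℂ) (Real.exp 1)).tendsto_subseq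
      (fun n => Metric.mem_closedBall.mpr (by simpa [dist_eq_norm] using hz_le n))
  -- denominators at w do not vanish
  have hdenw : ∀ σ ∈ G, pglDefinedField σ w := by
    intro σ hσ
    have hσf : σ ∈ Gf := by rw [← Finset.mem_coe, hGf]; exact hσ
    by_contra hden
    rw [pglDefinedField, not_not] at hden
    have hnum := num_ne_zero_of_den_eq_zero σ hden
    set a := algebraMap ℚ ℂ ((σ.out : Matrix (Fin 2) (Fin 2) ℚ) 0 0) with ha
    set b := algebraMap ℚ ℂ ((σ.out : Matrix (Fin 2) (Fin 2) ℚ) 0 1) with hb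
    set c := algebraMap ℚ ℂ ((σ.out : Matrix (Fin 2) (Fin 2) ℚ) 1 0) with hc
    set d := algebraMap ℚ ℂ ((σ.out : Matrix (Fin 2) (Fin 2) ℚ) 1 1) with hd
    have hnumt : Filter.Tendsto (fun m => ‖a * z (φ m) + b‖) Filter.atTop (nhds ‖a * w + b‖) :=
      (((hφtend.const_mul a).add_const b)).norm
    have hdent : Filter.Tendsto (fun m => Real.exp 1 * ‖c * z (φ m) + d‖) Filter.atTop
        (nhds (Real.exp 1 * ‖c * w + d‖)) :=
      (((hφtend.const_mul c).add_const d)).norm.const_mul _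
    have hle : ∀ m : ℕ, ‖a * z (φ m) + b‖ ≤ Real.exp 1 * ‖c * z (φ m) + d‖ := by
      intro m
      have hdm : c * z (φ m) + d ≠ 0 := (hzA (φ m) σ hσ).1
      have heq : a * z (φ m) + b = pglApplyField σ (z (φ m)) * (c * z (φ m) + d) := by
        rw [pglApplyField, ← ha, ← hb, ← hc, ← hd, div_mul_cancel₀ _ hdm]
      rw [heq, norm_mul]
      exact mul_le_mul_of_nonneg_right (himg_le (φ m) σ hσf) (norm_nonneg _)
    have hfin := le_of_tendsto_of_tendsto' hnumt hdent hle
    rw [hden] at hfin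
    simp only [norm_zero, mul_zero] at hfin
    exact absurd (le_antisymm hfin (norm_nonneg _)) (norm_ne_zero_iff.mpr hnum)
  -- the images of w lie on the unit circle
  have hinvtend : Filter.Tendsto (fun m : ℕ => (1 : ℝ)/(φ m + 1)) Filter.atTop (nhds 0) := by
    apply squeeze_zero (fun m => by positivity) (fun m => ?_)
      tendsto_one_div_add_atTop_nhds_zero_nat
    have hmφ : (m : ℝ) + 1 ≤ (φ m : ℝ) + 1 := by
      have h' : m ≤ φ m := hφmono.le_apply
      have := (Nat.cast_le (α := ℝ)).mpr h'
      linarith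
    exact one_div_le_one_div_of_le (by positivity) hmφ
  have habsw : ∀ σ ∈ G, ‖pglApplyField σ w‖ = 1 := by
    intro σ hσ
    have hσf : σ ∈ Gf := by rw [← Finset.mem_coe, hGf]; exact hσ
    have htend := (tendsto_pglApplyField σ (hdenw σ hσ) hφtend).norm
    have hlog0 : Filter.Tendsto (fun m => Real.log ‖pglApplyField σ (z (φ m))‖)
        Filter.atTop (nhds 0) := by
      apply squeeze_zero_norm (fun m => ?_) hinvtend
      simpa [Real.norm_eq_abs] using hterm (φ m) σ hσf
    have hone : Filter.Tendsto (fun m => ‖pglApplyField σ (z (φ m))‖)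
        Filter.atTop (nhds 1) := by
      have h2 := (Real.continuous_exp.tendsto 0).comp hlog0
      rw [Real.exp_zero] at h2
      refine h2.congr (fun m => ?_)
      exact Real.exp_log (norm_pos_iff.mpr (hzA (φ m) σ hσ).2.1)
    have := tendsto_nhds_unique htend hone
    exact this
  obtain ⟨j, σs, hσsG, hroot⟩ := exists_root_in_orbit G O hO α hαmem hdenw habsw
  have hσsf : σs ∈ Gf := by rw [← Finset.mem_coe, hGf]; exact hσsG
  have haev : Filter.Tendsto
      (fun m => (aeval (pglApplyField σs (z (φ m))) (intMinpoly (α j)) : ℂ))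
      Filter.atTop (nhds 0) := by
    have h3 := tendsto_aeval (intMinpoly (α j))
      (tendsto_pglApplyField σs (hdenw σs hσsG) hφtend)
    rwa [hroot, aeval_intMinpoly_self (hαalg j)] at h3
  set g : PGL2 × Fin k → ℝ := fun q =>
    Real.log (polyC (intMinpoly (α q.2))) + ((intMinpoly (α q.2)).natDegree : ℝ) with hg
  set M1 : ℝ := ∑ q ∈ Gf ×ˢ (Finset.univ : Finset (Fin k)), g q with hM1
  have hgnonneg : ∀ q, 0 ≤ g q := by
    intro q
    have := Real.log_nonneg (one_le_polyC (intMinpoly (α q.2)))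
    have := Nat.cast_nonneg (α := ℝ) (intMinpoly (α q.2)).natDegree
    rw [hg]; dsimp only; linarith
  have hevent : ∀ᶠ m in Filter.atTop,
      ‖(aeval (pglApplyField σs (z (φ m))) (intMinpoly (α j)) : ℂ)‖
        < Real.exp (-(1 + M1)) := by
    have h4 := haev.norm
    rw [norm_zero] at h4
    exact h4.eventually_lt_const (Real.exp_pos _)
  obtain ⟨m, hm⟩ := hevent.exists
  set zn := z (φ m) with hzn
  set f : PGL2 × Fin k → ℝ := fun q =>
    Real.log ‖(aeval (pglApplyField q.1 zn) (intMinpoly (α q.2)) : ℂ)‖ with hf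
  have hpair : ∀ q ∈ Gf ×ˢ (Finset.univ : Finset (Fin k)), f q ≤ g q := by
    rintro ⟨σ, i⟩ hq
    have hσ : σ ∈ Gf := (Finset.mem_product.mp hq).1
    have hne := (hzA (φ m) σ (hGmem σ hσ)).2.1
    have h1 : Real.log (max ‖pglApplyField σ zn‖ 1) ≤ 1 :=
      le_trans (logplus_le_abs (norm_pos_iff.mpr hne))
        (le_trans (hterm (φ m) σ hσ) (hinv_le_one _))
    have hd : (0:ℝ) ≤ ((intMinpoly (α i)).natDegree : ℝ) := Nat.cast_nonneg _
    refine le_trans (log_norm_aeval_le _ _) ?_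
    have := mul_le_mul_of_nonneg_left h1 hd
    rw [hg]; dsimp only; linarith
  have hqmem : (σs, j) ∈ Gf ×ˢ (Finset.univ : Finset (Fin k)) :=
    Finset.mem_product.mpr ⟨hσsf, Finset.mem_univ _⟩
  have hsplit : (∑ q ∈ (Gf ×ˢ (Finset.univ : Finset (Fin k))).erase (σs, j), f q)
      + f (σs, j) = ∑ q ∈ Gf ×ˢ (Finset.univ : Finset (Fin k)), f q :=
    Finset.sum_erase_add _ _ hqmem
  have hrest : (∑ q ∈ (Gf ×ˢ (Finset.univ : Finset (Fin k))).erase (σs, j), f q) ≤ M1 := by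
    calc (∑ q ∈ (Gf ×ˢ (Finset.univ : Finset (Fin k))).erase (σs, j), f q)
        ≤ ∑ q ∈ (Gf ×ˢ (Finset.univ : Finset (Fin k))).erase (σs, j), g q :=
          Finset.sum_le_sum (fun q hq => hpair q (Finset.mem_of_mem_erase hq))
      _ ≤ M1 := Finset.sum_le_sum_of_subset_of_nonneg (Finset.erase_subset _ _)
          (fun q _ _ => hgnonneg q)
  have hfval : f (σs, j) < -(1 + M1) := by
    have hne := (hzA (φ m) σs hσsG).2.2 j
    have hpos : (0:ℝ) < ‖(aeval (pglApplyField σs zn) (intMinpoly (α j)) : ℂ)‖ :=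
      norm_pos_iff.mpr hne
    have := Real.log_lt_log hpos hm
    rwa [Real.log_exp] at this
  have hLlt : (∑ q ∈ Gf ×ˢ (Finset.univ : Finset (Fin k)), f q) < -1 := by
    rw [← hsplit]; linarith
  have hLeq : (∑ q ∈ Gf ×ˢ (Finset.univ : Finset (Fin k)), f q)
      = ∑ σ ∈ Gf, ∑ i : Fin k,
          Real.log ‖(aeval (pglApplyField σ zn) (intMinpoly (α i)) : ℂ)‖ :=
    Finset.sum_product _ _ _
  have hL := hzL (φ m)
  rw [← hzn, ← hLeq] at hL
  have : -(1:ℝ) ≤ -(1/(φ m + 1)) := by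
    have := hinv_le_one (φ m)
    linarith
  linarith


/-! Batch 6: archimedean core -/

lemma archCore (G : Subgroup PGL2) (Gf : Finset PGL2) (hGf : ↑Gf = (G : Set PGL2))
    {k : ℕ} (O : Fin k → Set (OnePoint ℂ)) (hO : goodOrbits G = Set.range O)
    (α : Fin k → ℂ) (hαmem : ∀ i, (α i : OnePoint ℂ) ∈ O i)
    (hαalg : ∀ i, IsAlgebraic ℚ (α i)) :
    ∃ Bmax : ℝ, 0 < Bmax ∧
      Bmax * (∑ i : Fin k, ((intMinpoly (α i)).natDegree : ℝ)) ≤ 1/2 ∧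
      ∀ B : ℝ, 0 < B → B < Bmax → ∃ D : ℝ, 0 < D ∧
        ∀ z : ℂ, (∀ σ ∈ G, pglDefinedField σ z ∧ pglApplyField σ z ≠ 0 ∧
            ∀ i : Fin k, aeval (pglApplyField σ z) (intMinpoly (α i)) ≠ 0) →
          ∑ σ ∈ Gf, (Real.log (max ‖pglApplyField σ z‖ 1)
            - (1/2) * Real.log ‖pglApplyField σ z‖
            - B * ∑ i : Fin k,
                Real.log ‖(aeval (pglApplyField σ z) (intMinpoly (α i)) : ℂ)‖)
            ≥ D := by
  obtain ⟨δ, hδ, c, hc, hclaim⟩ := claimStar G Gf hGf O hO α hαmem hαalg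
  set Ntot : ℝ := ∑ i : Fin k, ((intMinpoly (α i)).natDegree : ℝ) with hNtot
  have hNnn : 0 ≤ Ntot := Finset.sum_nonneg fun i _ => Nat.cast_nonneg _
  set Cc : ℝ := ∑ i : Fin k, Real.log (polyC (intMinpoly (α i))) with hCc
  have hCcnn : 0 ≤ Cc := Finset.sum_nonneg fun i _ => Real.log_nonneg (one_le_polyC _)
  set Ct : ℝ := (Gf.card : ℝ) * Cc with hCt
  have hCtnn : 0 ≤ Ct := mul_nonneg (Nat.cast_nonneg _) hCcnn
  refine ⟨min (1/(4*Ntot+4)) (δ/(4*Ct+4)), lt_min (by positivity) (by positivity), ?_, ?_⟩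
  · have h1 : min (1/(4*Ntot+4)) (δ/(4*Ct+4)) ≤ 1/(4*Ntot+4) := min_le_left _ _
    have h2 : (0:ℝ) < 4*Ntot+4 := by linarith
    have h3 : (1/(4*Ntot+4)) * Ntot ≤ 1/2 := by
      rw [div_mul_eq_mul_div, one_mul, div_le_iff₀ h2]
      nlinarith
    calc min (1/(4*Ntot+4)) (δ/(4*Ct+4)) * Ntot
        ≤ (1/(4*Ntot+4)) * Ntot := mul_le_mul_of_nonneg_right h1 hNnn
      _ ≤ 1/2 := h3
  · intro B hB hBmax
    have hB1 : B < 1/(4*Ntot+4) := lt_of_lt_of_le hBmax (min_le_left _ _)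
    have hB2 : B < δ/(4*Ct+4) := lt_of_lt_of_le hBmax (min_le_right _ _)
    have h2 : (0:ℝ) < 4*Ntot+4 := by linarith
    have h2' : (0:ℝ) < 4*Ct+4 := by linarith
    have hq1 : B * (4*Ntot+4) < 1 := (lt_div_iff₀ h2).mp hB1
    have hq2 : B * (4*Ct+4) < δ := (lt_div_iff₀ h2').mp hB2
    have hBN : B * Ntot ≤ 1/4 := by nlinarith
    have hBCt : B * Ct < δ/4 := by nlinarith
    refine ⟨min (δ/4 - B*Ct) (B*c), lt_min (by linarith) (by positivity), ?_⟩
    intro z hz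
    have hGmem : ∀ σ ∈ Gf, σ ∈ G := fun σ hσ => by
      rw [← SetLike.mem_coe, ← hGf]; exact hσ
    have hterm_eq : ∀ σ ∈ Gf,
        Real.log (max ‖pglApplyField σ z‖ 1) - (1/2) * Real.log ‖pglApplyField σ z‖
          - B * ∑ i : Fin k, Real.log ‖(aeval (pglApplyField σ z) (intMinpoly (α i)) : ℂ)‖
        = (1/2) * |Real.log ‖pglApplyField σ z‖|
          - B * ∑ i : Fin k,
              Real.log ‖(aeval (pglApplyField σ z) (intMinpoly (α i)) : ℂ)‖ := by
      intro σ hσ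
      rw [← half_abs_log (norm_pos_iff.mpr (hz σ (hGmem σ hσ)).2.1)]
    rw [Finset.sum_congr rfl hterm_eq, Finset.sum_sub_distrib,
      ← Finset.mul_sum, ← Finset.mul_sum]
    set S := ∑ σ ∈ Gf, |Real.log ‖pglApplyField σ z‖| with hSdef
    set L := ∑ σ ∈ Gf, ∑ i : Fin k,
      Real.log ‖(aeval (pglApplyField σ z) (intMinpoly (α i)) : ℂ)‖ with hLdef
    have hSnn : 0 ≤ S := Finset.sum_nonneg fun σ _ => abs_nonneg _
    rcases le_total S δ with hcase | hcase
    · have hLc : L ≤ -c := hclaim z hz hcase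
      have hf : B * L ≤ B * (-c) := mul_le_mul_of_nonneg_left hLc hB.le
      refine le_trans (min_le_right _ _) ?_
      linarith
    · have hLbound : L ≤ Ct + Ntot * S := by
        have hinner : ∀ σ ∈ Gf,
            (∑ i : Fin k, Real.log ‖(aeval (pglApplyField σ z) (intMinpoly (α i)) : ℂ)‖)
              ≤ Cc + Ntot * |Real.log ‖pglApplyField σ z‖| := by
          intro σ hσ
          have htpos : (0:ℝ) < ‖pglApplyField σ z‖ :=
            norm_pos_iff.mpr (hz σ (hGmem σ hσ)).2.1
          have hlog : Real.log (max ‖pglApplyField σ z‖ 1)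
              ≤ |Real.log ‖pglApplyField σ z‖| := logplus_le_abs htpos
          calc (∑ i : Fin k, Real.log ‖(aeval (pglApplyField σ z) (intMinpoly (α i)) : ℂ)‖)
              ≤ ∑ i : Fin k, (Real.log (polyC (intMinpoly (α i)))
                  + ((intMinpoly (α i)).natDegree : ℝ)
                    * |Real.log ‖pglApplyField σ z‖|) := by
                refine Finset.sum_le_sum fun i _ => ?_
                refine le_trans (log_norm_aeval_le _ _) ?_
                have := mul_le_mul_of_nonneg_left hlog
                  (Nat.cast_nonneg (α := ℝ) (intMinpoly (α i)).natDegree)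
                linarith
            _ = Cc + Ntot * |Real.log ‖pglApplyField σ z‖| := by
                rw [Finset.sum_add_distrib, ← Finset.sum_mul]
        calc L ≤ ∑ σ ∈ Gf, (Cc + Ntot * |Real.log ‖pglApplyField σ z‖|) :=
              Finset.sum_le_sum hinner
          _ = Ct + Ntot * S := by
              rw [Finset.sum_add_distrib, Finset.sum_const, ← Finset.mul_sum,
                nsmul_eq_mul]
      have hf1 : B * L ≤ B * (Ct + Ntot * S) := mul_le_mul_of_nonneg_left hLbound hB.le
      have hf2 : (B * Ntot) * S ≤ (1/4) * S := mul_le_mul_of_nonneg_right hBN hSnn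
      refine le_trans (min_le_left _ _) ?_
      nlinarith


/-! Batch 7: transfer to embeddings and final plumbing -/

lemma pgl_map {K : Type*} [Field K] [Algebra ℚ K] (φ : K →+* ℂ) (σ : PGL2) (x : K)
    (h : pglDefinedField σ x) :
    pglDefinedField σ (φ x) ∧ pglApplyField σ (φ x) = φ (pglApplyField σ x) := by
  have halg : ∀ q : ℚ, φ (algebraMap ℚ K q) = algebraMap ℚ ℂ q := by
    intro q
    rw [eq_ratCast (algebraMap ℚ K), eq_ratCast (algebraMap ℚ ℂ), map_ratCast]
  have hden : φ (algebraMap ℚ K ((σ.out : Matrix (Fin 2) (Fin 2) ℚ) 1 0) * x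
        + algebraMap ℚ K ((σ.out : Matrix (Fin 2) (Fin 2) ℚ) 1 1))
      = algebraMap ℚ ℂ ((σ.out : Matrix (Fin 2) (Fin 2) ℚ) 1 0) * φ x
        + algebraMap ℚ ℂ ((σ.out : Matrix (Fin 2) (Fin 2) ℚ) 1 1) := by
    rw [map_add, map_mul, halg, halg]
  have hnum : φ (algebraMap ℚ K ((σ.out : Matrix (Fin 2) (Fin 2) ℚ) 0 0) * x
        + algebraMap ℚ K ((σ.out : Matrix (Fin 2) (Fin 2) ℚ) 0 1))
      = algebraMap ℚ ℂ ((σ.out : Matrix (Fin 2) (Fin 2) ℚ) 0 0) * φ x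
        + algebraMap ℚ ℂ ((σ.out : Matrix (Fin 2) (Fin 2) ℚ) 0 1) := by
    rw [map_add, map_mul, halg, halg]
  constructor
  · rw [pglDefinedField, ← hden]
    intro h0
    exact h (φ.injective (by rw [h0, map_zero]))
  · rw [pglApplyField, pglApplyField, map_div₀, hden, hnum]

lemma aeval_map_phi {K : Type*} [Field K] [Algebra ℚ K] (φ : K →+* ℂ) (p : ℤ[X]) (y : K) :
    φ (aeval y p) = aeval (φ y) p := by
  rw [Polynomial.aeval_def, Polynomial.aeval_def, Polynomial.hom_eval₂]
  congr 1
  exact RingHom.ext_int _ _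

lemma max_pow_comm {t : ℝ} (ht : 0 ≤ t) (m : ℕ) : max (t^m) 1 = (max t 1)^m := by
  rcases le_total t 1 with h | h
  · rw [max_eq_right h, one_pow, max_eq_right (pow_le_one₀ ht h)]
  · rw [max_eq_left h, max_eq_left (one_le_pow₀ h)]

/-- **Lemma 2.** Let `G ≤ PGL₂(ℚ)` be finite with `𝒪 = {O₁, …, O_k}` finite and nonempty,
`α i ∈ O i` algebraic with primitive minimal polynomials `p i ∈ ℤ[X]`, and let `K` be a
number field.  There is `B_max > 0` such that for all `0 < B < B_max` there is `D > 0`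
such that for every place `v` of `K` and every `x ∈ K` all of whose `G`-images lie in `K`,
are nonzero and are no roots of any `p i`, one has
`∑_{σ ∈ G} (log⁺|σx|_v - ½ log|σx|_v - B ∑ᵢ log|pᵢ(σx)|_v) ≥ n_v · D`. -/
theorem lemma_local (G : Subgroup PGL2) (hGfin : (G : Set PGL2).Finite)
    (k : ℕ) (hk : 0 < k) (O : Fin k → Set (OnePoint ℂ)) (hO : goodOrbits G = Set.range O)
    (α : Fin k → ℂ) (hαmem : ∀ i, (α i : OnePoint ℂ) ∈ O i)
    (hαalg : ∀ i, IsAlgebraic ℚ (α i))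
    (K : Type*) [Field K] [NumberField K] :
    ∃ Bmax : ℝ, 0 < Bmax ∧ ∀ B : ℝ, 0 < B → B < Bmax →
      ∃ D : ℝ, 0 < D ∧
        ∀ (v : Place K) (x : K),
          (∀ σ ∈ G, pglDefinedField σ x ∧ pglApplyField σ x ≠ 0 ∧
            ∀ i : Fin k, Polynomial.aeval (pglApplyField σ x) (intMinpoly (α i)) ≠ 0) →
          ∑ᶠ σ ∈ (G : Set PGL2),
              (Real.log (max (placeAbs v (pglApplyField σ x)) 1)
                - (1 / 2) * Real.log (placeAbs v (pglApplyField σ x))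
                - B * ∑ i : Fin k,
                    Real.log (placeAbs v
                      (Polynomial.aeval (pglApplyField σ x) (intMinpoly (α i)))))
            ≥ (placeN v : ℝ) * D := by
  classical
  set Gf := hGfin.toFinset with hGfdef
  have hGf : ↑Gf = (G : Set PGL2) := hGfin.coe_toFinset
  have hGmem : ∀ σ ∈ Gf, σ ∈ G := fun σ hσ => by
    rw [← SetLike.mem_coe, ← hGf]; exact hσ
  have hGmem' : ∀ σ ∈ G, σ ∈ Gf := fun σ hσ => by
    rw [← Finset.mem_coe, hGf]; exact hσ
  obtain ⟨Bmax, hBmax, hBN2, harch⟩ := archCore G Gf hGf O hO α hαmem hαalg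
  refine ⟨Bmax, hBmax, ?_⟩
  intro B hB hBlt
  obtain ⟨D, hD, hDall⟩ := harch B hB hBlt
  refine ⟨D, hD, ?_⟩
  intro v x hx
  have hsum_eq : ∀ f : PGL2 → ℝ, ∑ᶠ σ ∈ (G : Set PGL2), f σ = ∑ σ ∈ Gf, f σ := by
    intro f
    rw [← hGf, finsum_mem_coe_finset]
  rw [hsum_eq]
  set Ntot : ℝ := ∑ i : Fin k, ((intMinpoly (α i)).natDegree : ℝ) with hNtot
  have hNnn : 0 ≤ Ntot := Finset.sum_nonneg fun i _ => Nat.cast_nonneg _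
  have hBN : B * Ntot ≤ 1/2 :=
    le_trans (mul_le_mul_of_nonneg_right hBlt.le hNnn) hBN2
  obtain v | w := v
  · -- finite place
    have hplaceN : (placeN (Sum.inl v : Place K) : ℝ) = 0 := by norm_num [placeN]
    rw [hplaceN, zero_mul]
    refine Finset.sum_nonneg ?_
    intro σ hσ
    obtain ⟨hdef, hne, hroots⟩ := hx σ (hGmem σ hσ)
    set y := pglApplyField σ x with hy
    have hPA : ∀ u : K, placeAbs (Sum.inl v : Place K) u = finitePlaceAbs v u := fun u => rfl
    simp only [hPA]
    set t : ℝ := finitePlaceAbs v y with ht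
    have htpos : 0 < t := NonarchAux.fabs_pos v hne
    have hlogmax_nn : 0 ≤ Real.log (max t 1) :=
      Real.log_nonneg (le_max_right _ _)
    have hlog_le : Real.log t ≤ Real.log (max t 1) :=
      Real.log_le_log htpos (le_max_left _ _)
    have hinner : (∑ i : Fin k, Real.log (finitePlaceAbs v (aeval y (intMinpoly (α i)))))
        ≤ Ntot * Real.log (max t 1) := by
      calc (∑ i : Fin k, Real.log (finitePlaceAbs v (aeval y (intMinpoly (α i)))))
          ≤ ∑ i : Fin k, ((intMinpoly (α i)).natDegree : ℝ) * Real.log (max t 1) :=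
            Finset.sum_le_sum fun i _ => NonarchAux.log_fabs_aeval_le v (intMinpoly (α i)) hne
        _ = Ntot * Real.log (max t 1) := by rw [← Finset.sum_mul]
    have hf2 : B * (∑ i : Fin k, Real.log (finitePlaceAbs v (aeval y (intMinpoly (α i)))))
        ≤ B * (Ntot * Real.log (max t 1)) :=
      mul_le_mul_of_nonneg_left hinner hB.le
    nlinarith [mul_le_mul_of_nonneg_right hBN hlogmax_nn]
  · -- infinite place
    set m := w.mult with hm
    have hm0 : (0:ℝ) ≤ (m:ℝ) := Nat.cast_nonneg _
    set φ := w.embedding with hφ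
    set z := φ x with hz
    have hall : ∀ σ ∈ G, pglDefinedField σ z ∧ pglApplyField σ z ≠ 0 ∧
        ∀ i : Fin k, aeval (pglApplyField σ z) (intMinpoly (α i)) ≠ 0 := by
      intro σ hσ
      obtain ⟨hdef, hne, hroots⟩ := hx σ hσ
      obtain ⟨hdef', heq⟩ := pgl_map φ σ x hdef
      refine ⟨hdef', ?_, ?_⟩
      · rw [heq]
        exact fun h0 => hne (φ.injective (by rw [h0, map_zero]))
      · intro i
        rw [heq, ← aeval_map_phi φ]
        exact fun h0 => hroots i (φ.injective (by rw [h0, map_zero]))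
    have hkey := hDall z hall
    have hterm : ∀ σ ∈ Gf,
        (Real.log (max (placeAbs (Sum.inr w : Place K) (pglApplyField σ x)) 1)
          - (1 / 2) * Real.log (placeAbs (Sum.inr w : Place K) (pglApplyField σ x))
          - B * ∑ i : Fin k, Real.log (placeAbs (Sum.inr w : Place K)
              (aeval (pglApplyField σ x) (intMinpoly (α i)))))
        = (m:ℝ) * (Real.log (max ‖pglApplyField σ z‖ 1)
            - (1/2) * Real.log ‖pglApplyField σ z‖
            - B * ∑ i : Fin k,
                Real.log ‖(aeval (pglApplyField σ z) (intMinpoly (α i)) : ℂ)‖) := by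
      intro σ hσ
      obtain ⟨hdef, hne, hroots⟩ := hx σ (hGmem σ hσ)
      obtain ⟨hdef', heq⟩ := pgl_map φ σ x hdef
      have hPA : ∀ u : K, placeAbs (Sum.inr w : Place K) u = (w u)^m := fun u => rfl
      have hwnorm : ∀ u : K, w u = ‖φ u‖ := fun u => (InfinitePlace.norm_embedding_eq w u).symm
      have e1 : Real.log (max (placeAbs (Sum.inr w : Place K) (pglApplyField σ x)) 1)
          = (m:ℝ) * Real.log (max ‖pglApplyField σ z‖ 1) := by
        rw [hPA, hwnorm, heq.symm, max_pow_comm (norm_nonneg _), Real.log_pow]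
      have e2 : Real.log (placeAbs (Sum.inr w : Place K) (pglApplyField σ x))
          = (m:ℝ) * Real.log ‖pglApplyField σ z‖ := by
        rw [hPA, hwnorm, heq.symm, Real.log_pow]
      have e3 : ∀ i : Fin k, Real.log (placeAbs (Sum.inr w : Place K)
            (aeval (pglApplyField σ x) (intMinpoly (α i))))
          = (m:ℝ) * Real.log ‖(aeval (pglApplyField σ z) (intMinpoly (α i)) : ℂ)‖ := by
        intro i
        rw [hPA, hwnorm, aeval_map_phi φ, heq.symm, Real.log_pow]
      rw [e1, e2]
      have e4 : (∑ i : Fin k, Real.log (placeAbs (Sum.inr w : Place K)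
            (aeval (pglApplyField σ x) (intMinpoly (α i)))))
          = (m:ℝ) * ∑ i : Fin k,
              Real.log ‖(aeval (pglApplyField σ z) (intMinpoly (α i)) : ℂ)‖ := by
        rw [Finset.mul_sum]
        exact Finset.sum_congr rfl fun i _ => e3 i
      rw [e4]
      ring
    rw [Finset.sum_congr rfl hterm, ← Finset.mul_sum]
    have hplaceN : (placeN (Sum.inr w : Place K) : ℝ) = (m:ℝ) := rfl
    rw [hplaceN]
    exact mul_le_mul_of_nonneg_left hkey hm0
end

section
/- Let G be a finite subgroup of PGL₂(ℚ). Then the set 𝒪 is infinite if and only if there exist a, b ∈ ℚ with a² ≠ b² such that G is contained in the subgroup of PGL₂(ℚ) consisting of the images of the four matrices I, (0 1; 1 0), (a b; −b −a), and (b a; −a −b). -/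
/- For a nonzero `f ∈ ℤ[X]`, the Mahler measure `M(f) = |a_n| ∏ max(|α_i|,1)`. -/
open Polynomial

lemma mobius_infty (m : Matrix (Fin 2) (Fin 2) ℚ) :
    mobius m OnePoint.infty =
      if (m 1 0 : ℂ) = 0 then OnePoint.infty else (((m 0 0 : ℚ) : ℂ) / ((m 1 0 : ℚ) : ℂ) : ℂ) := rfl

lemma mobius_coe (m : Matrix (Fin 2) (Fin 2) ℚ) (z : ℂ) :
    mobius m (z : OnePoint ℂ) =
      if ((m 1 0 : ℚ) : ℂ) * z + ((m 1 1 : ℚ) : ℂ) = 0 then OnePoint.infty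
      else ((((m 0 0 : ℚ) : ℂ) * z + ((m 0 1 : ℚ) : ℂ)) / (((m 1 0 : ℚ) : ℂ) * z + ((m 1 1 : ℚ) : ℂ)) : ℂ) := rfl

lemma mobius_smul (r : ℚ) (hr : r ≠ 0) (m : Matrix (Fin 2) (Fin 2) ℚ) (x : OnePoint ℂ) :
    mobius (r • m) x = mobius m x := by
  have hr' : (r : ℂ) ≠ 0 := by exact_mod_cast hr
  cases x with
  | infty =>
    rw [mobius_infty, mobius_infty]
    simp only [Matrix.smul_apply, smul_eq_mul, Rat.cast_mul]
    rcases eq_or_ne ((m 1 0 : ℚ) : ℂ) 0 with h | h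
    · simp [h]
    · rw [if_neg (by simp [hr', h]), if_neg h, mul_div_mul_left _ _ hr']
  | coe z =>
    rw [mobius_coe, mobius_coe]
    simp only [Matrix.smul_apply, smul_eq_mul, Rat.cast_mul]
    have key : (r:ℂ) * (m 1 0 : ℚ) * z + (r:ℂ) * (m 1 1 : ℚ) = r * ((m 1 0 : ℚ) * z + (m 1 1 : ℚ)) := by ring
    rw [key]
    rcases eq_or_ne (((m 1 0 : ℚ):ℂ) * z + ((m 1 1 : ℚ):ℂ)) 0 with h | h
    · simp [h]
    · rw [if_neg (by simp [hr', h]), if_neg h]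
      congr 1
      field_simp

noncomputable def glOf (A : Matrix (Fin 2) (Fin 2) ℚ) (h : A.det ≠ 0) : GL (Fin 2) ℚ :=
  Matrix.GeneralLinearGroup.mk'' A (Ne.isUnit h)

lemma glOf_coe (A : Matrix (Fin 2) (Fin 2) ℚ) (h : A.det ≠ 0) :
    ((glOf A h : GL (Fin 2) ℚ) : Matrix (Fin 2) (Fin 2) ℚ) = A := rfl

lemma det_ne_zero_of_GL (g : GL (Fin 2) ℚ) : ((g : Matrix (Fin 2) (Fin 2) ℚ)).det ≠ 0 := by
  have : IsUnit ((g : Matrix (Fin 2) (Fin 2) ℚ)).det := by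
    rw [← Matrix.isUnit_iff_isUnit_det]
    exact ⟨g, rfl⟩
  exact this.ne_zero

lemma mem_center_GL2 {z : GL (Fin 2) ℚ} (hz : z ∈ Subgroup.center (GL (Fin 2) ℚ)) :
    ∃ r : ℚ, r ≠ 0 ∧ (z : Matrix (Fin 2) (Fin 2) ℚ) = r • 1 := by
  rw [Subgroup.mem_center_iff] at hz
  set Z := (z : Matrix (Fin 2) (Fin 2) ℚ) with hZ
  have hE : (!![1,1;0,1] : Matrix (Fin 2) (Fin 2) ℚ).det ≠ 0 := by
    simp [Matrix.det_fin_two_of]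
  have hF : (!![1,0;1,1] : Matrix (Fin 2) (Fin 2) ℚ).det ≠ 0 := by
    simp [Matrix.det_fin_two_of]
  have h1 : !![1,1;0,1] * Z = Z * !![1,1;0,1] := by
    have := congrArg Units.val (hz (glOf _ hE))
    rw [Units.val_mul, Units.val_mul, glOf_coe] at this
    exact this
  have h2 : !![1,0;1,1] * Z = Z * !![1,0;1,1] := by
    have := congrArg Units.val (hz (glOf _ hF))
    rw [Units.val_mul, Units.val_mul, glOf_coe] at this
    exact this
  have e10 : Z 1 0 = 0 := by
    have := congr_fun (congr_fun h1 0) 0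
    simp [Matrix.mul_apply, Fin.sum_univ_two] at this
    linarith
  have eaa : Z 1 1 = Z 0 0 := by
    have := congr_fun (congr_fun h1 0) 1
    simp [Matrix.mul_apply, Fin.sum_univ_two] at this
    linarith
  have e01 : Z 0 1 = 0 := by
    have := congr_fun (congr_fun h2 0) 0
    simp [Matrix.mul_apply, Fin.sum_univ_two] at this
    linarith
  have hdet : Z.det ≠ 0 := det_ne_zero_of_GL z
  rw [Matrix.det_fin_two, e10, e01, eaa] at hdet
  have ha : Z 0 0 ≠ 0 := by
    intro h; rw [h] at hdet; simp at hdet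
  refine ⟨Z 0 0, ha, ?_⟩
  apply Matrix.ext
  intro i j
  fin_cases i <;> fin_cases j <;>
    simp [Matrix.one_apply, e10, e01, eaa]

lemma det_smul_one (r : ℚ) : ((r • 1 : Matrix (Fin 2) (Fin 2) ℚ)).det = r ^ 2 := by
  rw [Matrix.det_smul, Matrix.det_one, mul_one]; norm_num

lemma scalar_mem_center {r : ℚ} (hr : r ≠ 0) :
    glOf (r • 1) (by rw [det_smul_one]; exact pow_ne_zero 2 hr) ∈
      Subgroup.center (GL (Fin 2) ℚ) := by
  rw [Subgroup.mem_center_iff]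
  intro g
  apply Units.ext
  show ((g : Matrix (Fin 2) (Fin 2) ℚ)) * (r • 1) = (r • 1) * (g : Matrix (Fin 2) (Fin 2) ℚ)
  rw [mul_smul_comm, smul_mul_assoc, mul_one, one_mul]
lemma pglApply_eq {σ : PGL2} {g : GL (Fin 2) ℚ} (h : (QuotientGroup.mk g : PGL2) = σ)
    (x : OnePoint ℂ) : pglApply σ x = mobius (g : Matrix (Fin 2) (Fin 2) ℚ) x := by
  have hout : (QuotientGroup.mk σ.out : PGL2) = σ := σ.out_eq
  rw [← hout] at h
  rw [QuotientGroup.eq] at h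
  obtain ⟨r, hr, hmat⟩ := mem_center_GL2 h
  have : (σ.out : Matrix (Fin 2) (Fin 2) ℚ) = r • (g : Matrix (Fin 2) (Fin 2) ℚ) := by
    have h2 : ((g * (g⁻¹ * Quotient.out σ) : GL (Fin 2) ℚ) : Matrix (Fin 2) (Fin 2) ℚ)
        = (g : Matrix (Fin 2) (Fin 2) ℚ) * (r • 1) := by
      rw [Units.val_mul, hmat]
    rw [mul_inv_cancel_left] at h2
    rw [h2, mul_smul_comm, mul_one]
  unfold pglApply
  rw [this, mobius_smul r hr]

lemma mobius_mul (M N : Matrix (Fin 2) (Fin 2) ℚ) (hN : N.det ≠ 0) (x : OnePoint ℂ) :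
    mobius (M * N) x = mobius M (mobius N x) := by
  set a := ((M 0 0 : ℚ) : ℂ) with ha
  set b := ((M 0 1 : ℚ) : ℂ) with hb
  set c := ((M 1 0 : ℚ) : ℂ) with hc
  set d := ((M 1 1 : ℚ) : ℂ) with hd
  set e := ((N 0 0 : ℚ) : ℂ) with he
  set f := ((N 0 1 : ℚ) : ℂ) with hf
  set g := ((N 1 0 : ℚ) : ℂ) with hg
  set h := ((N 1 1 : ℚ) : ℂ) with hh
  have hdet : e * h - f * g ≠ 0 := by
    rw [he, hf, hg, hh]
    intro hcon
    apply hN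
    rw [Matrix.det_fin_two]
    exact_mod_cast hcon
  have k00 : (((M * N) 0 0 : ℚ) : ℂ) = a * e + b * g := by
    rw [Matrix.mul_apply, Fin.sum_univ_two]; push_cast; ring
  have k01 : (((M * N) 0 1 : ℚ) : ℂ) = a * f + b * h := by
    rw [Matrix.mul_apply, Fin.sum_univ_two]; push_cast; ring
  have k10 : (((M * N) 1 0 : ℚ) : ℂ) = c * e + d * g := by
    rw [Matrix.mul_apply, Fin.sum_univ_two]; push_cast; ring
  have k11 : (((M * N) 1 1 : ℚ) : ℂ) = c * f + d * h := by
    rw [Matrix.mul_apply, Fin.sum_univ_two]; push_cast; ring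
  cases x with
  | infty =>
    rw [mobius_infty, mobius_infty, k10, k00]
    by_cases hg0 : g = 0
    · have he0 : e ≠ 0 := by
        intro h0; apply hdet; rw [h0, hg0]; ring
      rw [if_pos hg0, mobius_infty, hg0]
      by_cases hc0 : c = 0
      · rw [if_pos (by rw [hc0]; ring), if_pos hc0]
      · rw [if_neg (by simpa [he0] using mul_ne_zero hc0 he0), if_neg hc0]
        rw [mul_zero, add_zero, mul_zero, add_zero, mul_div_mul_right _ _ he0]
    · rw [if_neg hg0, mobius_coe]
      have hc1 : c * (e / g) + d = (c * e + d * g) / g := by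
        rw [mul_div_assoc', div_add' _ _ _ hg0]
      have hc2 : a * (e / g) + b = (a * e + b * g) / g := by
        rw [mul_div_assoc', div_add' _ _ _ hg0]
      by_cases hden : c * e + d * g = 0
      · rw [if_pos hden, if_pos (by rw [hc1, hden, zero_div])]
      · rw [if_neg hden, if_neg (by rw [hc1]; simp [hg0, hden]), hc1, hc2,
          div_div_div_cancel_right₀ hg0]
  | coe z =>
    rw [mobius_coe, mobius_coe, k10, k11, k00, k01]
    by_cases hNd : g * z + h = 0
    · have hef : e * z + f ≠ 0 := by
        intro h0
        apply hdet
        linear_combination e * hNd - g * h0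
      rw [if_pos hNd, mobius_infty]
      have hld : (c * e + d * g) * z + (c * f + d * h) = c * (e * z + f) := by
        linear_combination d * hNd
      by_cases hc0 : c = 0
      · rw [if_pos (by rw [hld, hc0]; ring), if_pos hc0]
      · rw [if_neg (by rw [hld]; exact mul_ne_zero hc0 hef), if_neg hc0]
        congr 1
        rw [hld]
        have hln : (a * e + b * g) * z + (a * f + b * h) = a * (e * z + f) := by
          linear_combination b * hNd
        rw [hln, mul_div_mul_right _ _ hef]
    · rw [if_neg hNd, mobius_coe]
      have hc1 : c * ((e * z + f) / (g * z + h)) + d =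
          ((c * e + d * g) * z + (c * f + d * h)) / (g * z + h) := by
        rw [mul_div_assoc', div_add' _ _ _ hNd]; congr 1; ring
      have hc2 : a * ((e * z + f) / (g * z + h)) + b =
          ((a * e + b * g) * z + (a * f + b * h)) / (g * z + h) := by
        rw [mul_div_assoc', div_add' _ _ _ hNd]; congr 1; ring
      by_cases hden : (c * e + d * g) * z + (c * f + d * h) = 0
      · rw [if_pos hden, if_pos (by rw [hc1, hden, zero_div])]
      · rw [if_neg hden, if_neg (by rw [hc1]; simp [hNd, hden]), hc1, hc2,
          div_div_div_cancel_right₀ hNd]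

lemma mobius_one (x : OnePoint ℂ) : mobius 1 x = x := by
  cases x with
  | infty => rw [mobius_infty]; simp [Matrix.one_apply]
  | coe z => rw [mobius_coe]; simp [Matrix.one_apply]

lemma pglApply_one (x : OnePoint ℂ) : pglApply 1 x = x := by
  rw [pglApply_eq (g := 1) (QuotientGroup.mk_one _), Units.val_one, mobius_one]

lemma pglApply_mul (σ τ : PGL2) (x : OnePoint ℂ) :
    pglApply (σ * τ) x = pglApply σ (pglApply τ x) := by
  have hmk : (QuotientGroup.mk (σ.out * τ.out) : PGL2) = σ * τ := by
    rw [QuotientGroup.mk_mul]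
    exact congrArg₂ HMul.hMul σ.out_eq τ.out_eq
  rw [pglApply_eq hmk, Units.val_mul,
    mobius_mul _ _ (det_ne_zero_of_GL τ.out)]
  rfl

lemma mobius_inj {M : Matrix (Fin 2) (Fin 2) ℚ} (hM : M.det ≠ 0) :
    Function.Injective (mobius M) := by
  intro x y hxy
  have h1 := mobius_mul M⁻¹ M hM x
  have h2 := mobius_mul M⁻¹ M hM y
  rw [Matrix.nonsing_inv_mul M (Ne.isUnit hM), mobius_one] at h1 h2
  rw [h1, hxy, ← h2]

lemma abs_circle_swap (a b : ℝ) {z : ℂ} (hz : ‖z‖ = 1) :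
    ‖(a : ℂ) * z + (b : ℂ)‖ = ‖(b : ℂ) * z + (a : ℂ)‖ := by
  have hzz : z * (starRingEnd ℂ) z = 1 := by
    rw [Complex.mul_conj]
    norm_cast
    simp [Complex.normSq_eq_norm_sq, hz]
  calc ‖(a : ℂ) * z + (b : ℂ)‖
      = ‖(starRingEnd ℂ) ((a : ℂ) * z + (b : ℂ))‖ := (Complex.norm_conj _).symm
    _ = ‖z * (starRingEnd ℂ) ((a : ℂ) * z + (b : ℂ))‖ := by
        rw [norm_mul, hz, one_mul]
    _ = ‖(b : ℂ) * z + (a : ℂ)‖ := by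
        congr 1
        rw [map_add, map_mul, Complex.conj_ofReal, Complex.conj_ofReal]
        linear_combination (a : ℂ) * hzz

lemma abs_circle_swap_rat (a b : ℚ) {z : ℂ} (hz : ‖z‖ = 1) :
    ‖(a : ℂ) * z + (b : ℂ)‖ = ‖(b : ℂ) * z + (a : ℂ)‖ := by
  have := abs_circle_swap (a : ℝ) (b : ℝ) hz
  push_cast at this
  exact this

lemma matA_entries (a b : ℚ) :
    (!![a, b; -b, -a] : Matrix (Fin 2) (Fin 2) ℚ) 0 0 = a ∧
    (!![a, b; -b, -a] : Matrix (Fin 2) (Fin 2) ℚ) 0 1 = b ∧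
    (!![a, b; -b, -a] : Matrix (Fin 2) (Fin 2) ℚ) 1 0 = -b ∧
    (!![a, b; -b, -a] : Matrix (Fin 2) (Fin 2) ℚ) 1 1 = -a := by
  refine ⟨?_, ?_, ?_, ?_⟩ <;> simp

lemma detA_ne_zero {a b : ℚ} (hab : a ^ 2 ≠ b ^ 2) :
    (!![a, b; -b, -a] : Matrix (Fin 2) (Fin 2) ℚ).det ≠ 0 := by
  rw [Matrix.det_fin_two_of]
  intro hcon
  apply hab
  nlinarith [hcon]

lemma mobius_A_circle (a b : ℚ) (hab : a ^ 2 ≠ b ^ 2) {z : ℂ} (hz : ‖z‖ = 1) :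
    ∃ w : ℂ, ‖w‖ = 1 ∧ mobius !![a, b; -b, -a] (z : OnePoint ℂ) = (w : OnePoint ℂ) := by
  obtain ⟨e00, e01, e10, e11⟩ := matA_entries a b
  have hden : ((-b : ℚ) : ℂ) * z + ((-a : ℚ) : ℂ) ≠ 0 := by
    intro hcon
    apply hab
    have h1 : ((b : ℚ) : ℂ) * z = -((a : ℚ) : ℂ) := by push_cast at hcon ⊢; linear_combination -hcon
    have h2 := congrArg (‖·‖) h1
    rw [norm_mul, hz, mul_one, norm_neg] at h2
    have h2' : |(b : ℝ)| = |(a : ℝ)| := by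
      rwa [show ((b:ℚ):ℂ) = ((b:ℝ):ℂ) by push_cast; rfl,
        show ((a:ℚ):ℂ) = ((a:ℝ):ℂ) by push_cast; rfl,
        Complex.norm_real, Complex.norm_real, Real.norm_eq_abs, Real.norm_eq_abs] at h2
    have : (a : ℝ) ^ 2 = (b : ℝ) ^ 2 := by
      rw [← sq_abs, ← sq_abs (b:ℝ), h2']
    exact_mod_cast this
  refine ⟨(((a : ℚ) : ℂ) * z + ((b : ℚ) : ℂ)) / (((-b : ℚ) : ℂ) * z + ((-a : ℚ) : ℂ)), ?_, ?_⟩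
  · rw [norm_div]
    have hnum : ‖((a : ℚ) : ℂ) * z + ((b : ℚ) : ℂ)‖ =
        ‖((-b : ℚ) : ℂ) * z + ((-a : ℚ) : ℂ)‖ := by
      have := abs_circle_swap_rat a b hz
      calc ‖((a : ℚ) : ℂ) * z + ((b : ℚ) : ℂ)‖
          = ‖((b : ℚ) : ℂ) * z + ((a : ℚ) : ℂ)‖ := this
        _ = ‖-(((b : ℚ) : ℂ) * z + ((a : ℚ) : ℂ))‖ := (norm_neg _).symm
        _ = ‖((-b : ℚ) : ℂ) * z + ((-a : ℚ) : ℂ)‖ := by push_cast; ring_nf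
    rw [hnum, div_self]
    intro hcon
    exact hden (norm_eq_zero.mp hcon)
  · rw [mobius_coe, e00, e01, e10, e11, if_neg hden]

lemma mobius_J_circle {z : ℂ} (hz : ‖z‖ = 1) :
    ∃ w : ℂ, ‖w‖ = 1 ∧
      mobius !![0, 1; 1, 0] (z : OnePoint ℂ) = (w : OnePoint ℂ) := by
  have hz0 : z ≠ 0 := by
    intro h; rw [h] at hz; simp at hz
  have hden : ((1 : ℚ) : ℂ) * z + ((0 : ℚ) : ℂ) ≠ 0 := by simpa using hz0
  refine ⟨1 / z, by rw [norm_div, norm_one, hz, div_one], ?_⟩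
  rw [mobius_coe]
  simp only [show (!![(0:ℚ), 1; 1, 0]) 0 0 = 0 by simp, show (!![(0:ℚ), 1; 1, 0]) 0 1 = 1 by simp,
    show (!![(0:ℚ), 1; 1, 0]) 1 0 = 1 by simp, show (!![(0:ℚ), 1; 1, 0]) 1 1 = 0 by simp]
  rw [if_neg hden]
  push_cast
  simp

noncomputable def circPt (n : ℕ) : ℂ :=
  ⟨(1 - (n:ℝ)^2)/(1+(n:ℝ)^2), 2*(n:ℝ)/(1+(n:ℝ)^2)⟩

lemma circPt_abs (n : ℕ) : ‖circPt n‖ = 1 := by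
  have hd : (0:ℝ) < 1 + (n:ℝ)^2 := by positivity
  have hn : Complex.normSq (circPt n) = 1 := by
    rw [Complex.normSq_apply]
    show (1 - (n:ℝ)^2)/(1+(n:ℝ)^2) * ((1 - (n:ℝ)^2)/(1+(n:ℝ)^2)) +
      2*(n:ℝ)/(1+(n:ℝ)^2) * (2*(n:ℝ)/(1+(n:ℝ)^2)) = 1
    field_simp
    ring
  rw [Complex.norm_def, hn, Real.sqrt_one]

lemma circPt_inj : Function.Injective circPt := by
  intro m n h
  have hre := congrArg Complex.re h
  have hm : (0:ℝ) < 1 + (m:ℝ)^2 := by positivity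
  have hn : (0:ℝ) < 1 + (n:ℝ)^2 := by positivity
  have hre' : (1 - (m:ℝ)^2)/(1+(m:ℝ)^2) = (1 - (n:ℝ)^2)/(1+(n:ℝ)^2) := hre
  rw [div_eq_div_iff (ne_of_gt hm) (ne_of_gt hn)] at hre'
  have h2 : (m:ℝ)^2 = (n:ℝ)^2 := by nlinarith [hre']
  have h3 : m^2 = n^2 := by exact_mod_cast h2
  exact Nat.pow_left_injective (by norm_num) h3

lemma pglOrbit_finite {G : Subgroup PGL2} (hGfin : (G : Set PGL2).Finite) (x : OnePoint ℂ) :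
    {y | ∃ σ ∈ G, pglApply σ x = y}.Finite := by
  have : {y | ∃ σ ∈ G, pglApply σ x = y} = (fun σ => pglApply σ x) '' (G : Set PGL2) := rfl
  rw [this]
  exact hGfin.image _

lemma backward_dir (G : Subgroup PGL2) (hGfin : (G : Set PGL2).Finite)
    (h : ∃ a b : ℚ, a ^ 2 ≠ b ^ 2 ∧
        ∀ σ ∈ G, ∃ g : GL (Fin 2) ℚ, (QuotientGroup.mk g : PGL2) = σ ∧
          ((g : Matrix (Fin 2) (Fin 2) ℚ) = 1 ∨
           (g : Matrix (Fin 2) (Fin 2) ℚ) = !![0, 1; 1, 0] ∨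
           (g : Matrix (Fin 2) (Fin 2) ℚ) = !![a, b; -b, -a] ∨
           (g : Matrix (Fin 2) (Fin 2) ℚ) = !![b, a; -a, -b])) :
    ¬ (goodOrbits G).Finite := by
  obtain ⟨a, b, hab, hG⟩ := h
  intro hfin
  have horb : ∀ σ ∈ G, ∀ z : ℂ, ‖z‖ = 1 →
      ∃ w : ℂ, ‖w‖ = 1 ∧ pglApply σ (z : OnePoint ℂ) = (w : OnePoint ℂ) := by
    intro σ hσ z hz
    obtain ⟨g, hg, hmat⟩ := hG σ hσ
    rcases hmat with h1 | hJ | hA | hB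
    · exact ⟨z, hz, by rw [pglApply_eq hg, h1, mobius_one]⟩
    · obtain ⟨w, hw, he⟩ := mobius_J_circle hz
      exact ⟨w, hw, by rw [pglApply_eq hg, hJ, he]⟩
    · obtain ⟨w, hw, he⟩ := mobius_A_circle a b hab hz
      exact ⟨w, hw, by rw [pglApply_eq hg, hA, he]⟩
    · obtain ⟨w, hw, he⟩ := mobius_A_circle b a (Ne.symm hab) hz
      exact ⟨w, hw, by rw [pglApply_eq hg, hB, he]⟩
  have hgood : ∀ z : ℂ, ‖z‖ = 1 → pglOrbit G (z : OnePoint ℂ) ∈ goodOrbits G := by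
    intro z hz
    refine ⟨⟨(z : OnePoint ℂ), rfl⟩, ?_⟩
    rintro y ⟨σ, hσ, rfl⟩
    obtain ⟨w, hw, he⟩ := horb σ hσ z hz
    exact Or.inr ⟨w, he, hw⟩
  have hUfin : (⋃₀ goodOrbits G).Finite := by
    refine Set.Finite.sUnion hfin ?_
    rintro O ⟨⟨x, rfl⟩, -⟩
    exact pglOrbit_finite hGfin x
  have hpre : {z : ℂ | (z : OnePoint ℂ) ∈ ⋃₀ goodOrbits G}.Finite := by
    refine Set.Finite.preimage ?_ hUfin
    intro u _ v _ huv
    exact OnePoint.coe_injective huv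
  have hinf : {z : ℂ | (z : OnePoint ℂ) ∈ ⋃₀ goodOrbits G}.Infinite := by
    apply Set.infinite_of_injective_forall_mem circPt_inj
    intro n
    exact ⟨pglOrbit G (circPt n : OnePoint ℂ), hgood _ (circPt_abs n),
      ⟨1, G.one_mem, pglApply_one _⟩⟩
  exact hinf hpre

lemma exists_pow_eq_one {G : Subgroup PGL2} (hGfin : (G : Set PGL2).Finite) {σ : PGL2}
    (hσ : σ ∈ G) : ∃ n : ℕ, 0 < n ∧ σ ^ n = 1 := by
  haveI : Finite G := hGfin.to_subtype
  refine ⟨Nat.card G, Nat.card_pos, ?_⟩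
  have h1 : (⟨σ, hσ⟩ : G) ^ Nat.card G = 1 := pow_card_eq_one'
  have h2 := congrArg (Subgroup.subtype G) h1
  rw [map_pow, map_one] at h2
  exact h2

lemma mk_glOf_smul {A : Matrix (Fin 2) (Fin 2) ℚ} (hA : A.det ≠ 0) {r : ℚ} (hr : r ≠ 0)
    (hrA : (r • A).det ≠ 0) :
    (QuotientGroup.mk (glOf (r • A) hrA) : PGL2) = QuotientGroup.mk (glOf A hA) := by
  have hscal : ((r • 1 : Matrix (Fin 2) (Fin 2) ℚ)).det ≠ 0 := by
    rw [det_smul_one]; exact pow_ne_zero 2 hr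
  have hu : glOf (r • A) hrA = glOf (r • (1 : Matrix (Fin 2) (Fin 2) ℚ)) hscal * glOf A hA := by
    apply Units.ext
    show r • A = (r • 1) * A
    rw [smul_mul_assoc, one_mul]
  rw [hu, QuotientGroup.mk_mul, (QuotientGroup.eq_one_iff _).mpr (scalar_mem_center hr), one_mul]

lemma mulVec_pow_eigen {Z : Matrix (Fin 2) (Fin 2) ℚ} {v : Fin 2 → ℚ} {μ : ℚ}
    (h : Z.mulVec v = μ • v) (n : ℕ) : (Z ^ n).mulVec v = μ ^ n • v := by
  induction n with
  | zero => simp [Matrix.one_mulVec]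
  | succ n ih =>
    rw [pow_succ, ← Matrix.mulVec_mulVec, h, Matrix.mulVec_smul, ih, smul_smul, pow_succ]
    ring_nf

lemma symm_mat_ab_zero {G : Subgroup PGL2} (hGfin : (G : Set PGL2).Finite) {σ : PGL2}
    (hσ : σ ∈ G) {a b : ℚ} (hdet : (!![a, b; b, a] : Matrix (Fin 2) (Fin 2) ℚ).det ≠ 0)
    (hmk : (QuotientGroup.mk (glOf !![a, b; b, a] hdet) : PGL2) = σ) : a * b = 0 := by
  obtain ⟨n, hn, hpow⟩ := exists_pow_eq_one hGfin hσ
  have h1 : (QuotientGroup.mk ((glOf !![a, b; b, a] hdet) ^ n) : PGL2) = 1 := by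
    have hmp : (QuotientGroup.mk ((glOf !![a, b; b, a] hdet) ^ n) : PGL2) =
        (QuotientGroup.mk (glOf !![a, b; b, a] hdet) : PGL2) ^ n :=
      map_pow (QuotientGroup.mk' (Subgroup.center (GL (Fin 2) ℚ))) _ n
    rw [hmp, hmk, hpow]
  have h2 : (glOf !![a, b; b, a] hdet) ^ n ∈ Subgroup.center (GL (Fin 2) ℚ) :=
    (QuotientGroup.eq_one_iff _).mp h1
  obtain ⟨r, hr, hmat⟩ := mem_center_GL2 h2
  have hmat' : (!![a, b; b, a] : Matrix (Fin 2) (Fin 2) ℚ) ^ n = r • 1 := by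
    rw [← hmat]
    exact (Units.val_pow_eq_pow_val (glOf !![a, b; b, a] hdet) n).symm
  have hv1 : (!![a, b; b, a] : Matrix (Fin 2) (Fin 2) ℚ).mulVec ![1, 1] = (a + b) • ![1, 1] := by
    funext i
    fin_cases i <;> simp [Matrix.mulVec, dotProduct, Fin.sum_univ_two] <;> ring
  have hv2 : (!![a, b; b, a] : Matrix (Fin 2) (Fin 2) ℚ).mulVec ![1, -1] =
      (a - b) • ![1, -1] := by
    funext i
    fin_cases i <;> simp [Matrix.mulVec, dotProduct, Fin.sum_univ_two] <;> ring
  have e1 := mulVec_pow_eigen hv1 n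
  have e2 := mulVec_pow_eigen hv2 n
  rw [hmat'] at e1 e2
  have c1 : (a + b) ^ n = r := by
    have := congr_fun e1 0
    simpa [Matrix.mulVec, dotProduct, Fin.sum_univ_two, Matrix.one_apply] using this.symm
  have c2 : (a - b) ^ n = r := by
    have := congr_fun e2 0
    simpa [Matrix.mulVec, dotProduct, Fin.sum_univ_two, Matrix.one_apply] using this.symm
  have heq : (a + b) ^ n = (a - b) ^ n := by rw [c1, c2]
  have habs : |a + b| = |a - b| := by
    have h3 : |a + b| ^ n = |a - b| ^ n := by
      rw [← abs_pow, ← abs_pow, heq]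
    exact (pow_left_inj₀ (abs_nonneg _) (abs_nonneg _) hn.ne').mp h3
  rcases abs_eq_abs.mp habs with h | h
  · have : b = 0 := by linarith
    rw [this, mul_zero]
  · have : a = 0 := by linarith
    rw [this, zero_mul]

lemma detJ : (!![(0:ℚ), 1; 1, 0] : Matrix (Fin 2) (Fin 2) ℚ).det ≠ 0 := by
  simp [Matrix.det_fin_two_of]

lemma prop_of_cross {u v x y : ℚ} (huv : ¬(u = 0 ∧ v = 0)) (h : x * v - u * y = 0) :
    ∃ l : ℚ, x = l * u ∧ y = l * v := by
  by_cases hu : u = 0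
  · have hv : v ≠ 0 := fun hv => huv ⟨hu, hv⟩
    have hx : x = 0 := by
      have hxv : x * v = 0 := by rw [hu] at h; linarith
      exact (mul_eq_zero.mp hxv).resolve_right hv
    exact ⟨y / v, by rw [hx, hu, mul_zero], by field_simp⟩
  · refine ⟨x / u, by field_simp, ?_⟩
    field_simp
    linarith

lemma classify {G : Subgroup PGL2} (hGfin : (G : Set PGL2).Finite) {σ : PGL2} (hσ : σ ∈ G)
    {T : Set ℂ} (hT : T.Infinite) (hTc : ∀ z ∈ T, ‖z‖ = 1)
    (hmap : ∀ z ∈ T, pglApply σ (z : OnePoint ℂ) = ((0 : ℂ) : OnePoint ℂ) ∨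
      ∃ w : ℂ, pglApply σ (z : OnePoint ℂ) = (w : OnePoint ℂ) ∧ ‖w‖ = 1) :
    σ = 1 ∨
    σ = QuotientGroup.mk (glOf !![0, 1; 1, 0] detJ) ∨
    (∃ a b : ℚ, ∃ hab : a ^ 2 ≠ b ^ 2,
      σ = QuotientGroup.mk (glOf !![a, b; -b, -a] (detA_ne_zero hab))) := by
  set Z := ((σ.out : GL (Fin 2) ℚ) : Matrix (Fin 2) (Fin 2) ℚ) with hZdef
  have hdetZ : Z.det ≠ 0 := det_ne_zero_of_GL _
  have happ : ∀ x, pglApply σ x = mobius Z x := fun x => pglApply_eq σ.out_eq x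
  have hmkZ : (QuotientGroup.mk (glOf Z hdetZ) : PGL2) = σ := by
    rw [show glOf Z hdetZ = σ.out from Units.ext rfl]
    exact σ.out_eq
  set a := Z 0 0 with hadef
  set b := Z 0 1 with hbdef
  set c := Z 1 0 with hcdef
  set d := Z 1 1 with hddef
  have hdet2 : a * d - b * c ≠ 0 := by rwa [Matrix.det_fin_two] at hdetZ
  -- remove the at most one point mapped to 0
  have hT0 : {z | z ∈ T ∧ pglApply σ (z : OnePoint ℂ) = ((0 : ℂ) : OnePoint ℂ)}.Subsingleton := by
    intro z1 h1 z2 h2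
    have hinj := mobius_inj hdetZ (a₁ := ((z1 : ℂ) : OnePoint ℂ)) (a₂ := ((z2 : ℂ) : OnePoint ℂ))
    have heq : mobius Z (z1 : OnePoint ℂ) = mobius Z (z2 : OnePoint ℂ) := by
      rw [← happ, ← happ, h1.2, h2.2]
    exact OnePoint.coe_injective (hinj heq)
  have hT' : (T \ {z | z ∈ T ∧ pglApply σ (z : OnePoint ℂ) = ((0 : ℂ) : OnePoint ℂ)}).Infinite :=
    hT.diff hT0.finite
  set T' := T \ {z | z ∈ T ∧ pglApply σ (z : OnePoint ℂ) = ((0 : ℂ) : OnePoint ℂ)} with hT'def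
  have hkey : ∀ z ∈ T', ‖(a : ℂ) * z + (b : ℂ)‖ =
      ‖(c : ℂ) * z + (d : ℂ)‖ := by
    intro z hz
    have hzT : z ∈ T := hz.1
    have hz0 : ¬ pglApply σ (z : OnePoint ℂ) = ((0 : ℂ) : OnePoint ℂ) := fun h => hz.2 ⟨hzT, h⟩
    obtain ⟨w, hw, hw1⟩ := (hmap z hzT).resolve_left hz0
    rw [happ, mobius_coe] at hw
    by_cases hden : (c : ℂ) * z + (d : ℂ) = 0
    · rw [if_pos hden] at hw
      exact absurd hw (OnePoint.infty_ne_coe w)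
    · rw [if_neg hden] at hw
      have hweq : ((a : ℂ) * z + (b : ℂ)) / ((c : ℂ) * z + (d : ℂ)) = w :=
        OnePoint.coe_injective hw
      have := congrArg (‖·‖) hweq
      rw [norm_div, hw1, div_eq_one_iff_eq (fun h0 => hden (norm_eq_zero.mp h0))] at this
      exact this
  -- two points with distinct real part
  have hre : ∃ z1 ∈ T', ∃ z2 ∈ T', z1.re ≠ z2.re := by
    by_contra hcon
    push_neg at hcon
    obtain ⟨z0, hz0⟩ := hT'.nonempty
    apply hT'
    apply ((Set.finite_singleton ((starRingEnd ℂ) z0)).insert z0).subset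
    intro z hz
    have h1 : z.re = z0.re := hcon z hz z0 hz0
    have hn1 : z.re ^ 2 + z.im ^ 2 = 1 := by
      have := hTc z hz.1
      have h2 : Complex.normSq z = 1 := by
        rw [← Complex.sq_norm, this, one_pow]
      rw [Complex.normSq_apply] at h2
      linarith [h2]
    have hn0 : z0.re ^ 2 + z0.im ^ 2 = 1 := by
      have := hTc z0 hz0.1
      have h2 : Complex.normSq z0 = 1 := by
        rw [← Complex.sq_norm, this, one_pow]
      rw [Complex.normSq_apply] at h2
      linarith [h2]
    have him : (z.im - z0.im) * (z.im + z0.im) = 0 := by linear_combination hn1 - hn0 - (z.re + z0.re) * h1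
    rcases mul_eq_zero.mp him with h | h
    · left
      exact Complex.ext h1 (by linarith)
    · right
      refine Complex.ext ?_ ?_
      · rw [Complex.conj_re]; exact h1
      · rw [Complex.conj_im]; linarith
  obtain ⟨z1, hz1, z2, hz2, hrene⟩ := hre
  -- extract the real equations
  have mkeq : ∀ z ∈ T', (a : ℝ) ^ 2 + b ^ 2 + 2 * a * b * z.re =
      (c : ℝ) ^ 2 + d ^ 2 + 2 * c * d * z.re := by
    intro z hz
    have habs := hkey z hz
    have hn : z.re ^ 2 + z.im ^ 2 = 1 := by
      have := hTc z hz.1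
      have h2 : Complex.normSq z = 1 := by rw [← Complex.sq_norm, this, one_pow]
      rw [Complex.normSq_apply] at h2
      linarith [h2]
    have hEq : Complex.normSq ((a : ℂ) * z + (b : ℂ)) =
        Complex.normSq ((c : ℂ) * z + (d : ℂ)) := by
      rw [← Complex.sq_norm, ← Complex.sq_norm, habs]
    have hre1 : ((a : ℂ) * z + (b : ℂ)).re = (a : ℝ) * z.re + (b : ℝ) := by
      simp [Complex.add_re, Complex.mul_re]
    have him1 : ((a : ℂ) * z + (b : ℂ)).im = (a : ℝ) * z.im := by
      simp [Complex.add_im, Complex.mul_im]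
    have hre2 : ((c : ℂ) * z + (d : ℂ)).re = (c : ℝ) * z.re + (d : ℝ) := by
      simp [Complex.add_re, Complex.mul_re]
    have him2 : ((c : ℂ) * z + (d : ℂ)).im = (c : ℝ) * z.im := by
      simp [Complex.add_im, Complex.mul_im]
    rw [Complex.normSq_apply, Complex.normSq_apply, hre1, him1, hre2, him2] at hEq
    linear_combination hEq - ((a : ℝ) ^ 2 - (c : ℝ) ^ 2) * hn
  have key1 := mkeq z1 hz1
  have key2 := mkeq z2 hz2
  have habr : (a : ℝ) * b = (c : ℝ) * d := by
    have hz : ((a : ℝ) * b - (c : ℝ) * d) * (z1.re - z2.re) = 0 := by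
      linear_combination (key1 - key2) / 2
    rcases mul_eq_zero.mp hz with h | h
    · linarith
    · exact absurd (by linarith : z1.re = z2.re) hrene
  have hsumr : (a : ℝ) ^ 2 + b ^ 2 = (c : ℝ) ^ 2 + d ^ 2 := by
    linear_combination key1 - 2 * z1.re * habr
  have hab : a * b = c * d := by exact_mod_cast habr
  have hsum : a ^ 2 + b ^ 2 = c ^ 2 + d ^ 2 := by exact_mod_cast hsumr
  -- solve for (c, d)
  have hsq1 : (c + d) ^ 2 = (a + b) ^ 2 := by linear_combination hsum.symm + 2 * hab.symm
  have hsq2 : (c - d) ^ 2 = (a - b) ^ 2 := by linear_combination hsum.symm - 2 * hab.symm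
  have hc1 := (pow_eq_pow_iff_of_ne_zero two_ne_zero).mp hsq1
  have hc2 := (pow_eq_pow_iff_of_ne_zero two_ne_zero).mp hsq2
  have hZeta : Z = !![a, b; c, d] := by
    rw [hadef, hbdef, hcdef, hddef]
    exact Matrix.etaExpand_eq Z ▸ (Matrix.eta_fin_two Z)
  rcases hc1 with h1 | ⟨h1, -⟩ <;> rcases hc2 with h2 | ⟨h2, -⟩
  · -- c = a, d = b : contradiction with det
    refine absurd ?_ hdet2
    have hc : c = a := by linarith
    have hd : d = b := by linarith
    rw [hc, hd]; ring
  · -- c = b, d = a : symmetric matrix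
    have hcb : c = b := by linarith
    have hda : d = a := by linarith
    have hZs : Z = !![a, b; b, a] := by rw [hZeta, hcb, hda]
    have hdets : (!![a, b; b, a] : Matrix (Fin 2) (Fin 2) ℚ).det ≠ 0 := hZs ▸ hdetZ
    have hmk' : (QuotientGroup.mk (glOf !![a, b; b, a] hdets) : PGL2) = σ := by
      rw [← hmkZ]
      congr 1
      exact Units.ext (by rw [glOf_coe, glOf_coe, hZs])
    have hab0 := symm_mat_ab_zero hGfin hσ hdets hmk'
    have hdetv : a ^ 2 - b ^ 2 ≠ 0 := by
      intro h0
      apply hdets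
      rw [Matrix.det_fin_two_of]
      linear_combination h0
    rcases mul_eq_zero.mp hab0 with ha0 | hb0
    · -- a = 0 : J type
      right; left
      have hb0 : b ≠ 0 := by
        intro h0; apply hdetv; rw [ha0, h0]; ring
      have hsm : (!![a, b; b, a] : Matrix (Fin 2) (Fin 2) ℚ) = b • !![0, 1; 1, 0] := by
        rw [ha0]
        apply Matrix.ext
        intro i j
        fin_cases i <;> fin_cases j <;> simp
      have hdetsm : ((b • !![0, 1; 1, 0] : Matrix (Fin 2) (Fin 2) ℚ)).det ≠ 0 := hsm ▸ hdets
      rw [← hmk']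
      rw [show glOf !![a, b; b, a] hdets = glOf (b • !![0, 1; 1, 0]) hdetsm from
        Units.ext (by rw [glOf_coe, glOf_coe, hsm])]
      exact mk_glOf_smul detJ hb0 hdetsm
    · -- b = 0 : identity
      left
      have ha0 : a ≠ 0 := by
        intro h0; apply hdetv; rw [hb0, h0]; ring
      have hsm : (!![a, b; b, a] : Matrix (Fin 2) (Fin 2) ℚ) = a • 1 := by
        rw [hb0]
        apply Matrix.ext
        intro i j
        fin_cases i <;> fin_cases j <;> simp [Matrix.one_apply]
      have hdetsm : ((a • 1 : Matrix (Fin 2) (Fin 2) ℚ)).det ≠ 0 := hsm ▸ hdets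
      rw [← hmk']
      rw [show glOf !![a, b; b, a] hdets = glOf (a • 1) hdetsm from
        Units.ext (by rw [glOf_coe, glOf_coe, hsm])]
      exact (QuotientGroup.eq_one_iff _).mpr (scalar_mem_center ha0)
  · -- c = -b, d = -a : A type
    have hcb : c = -b := by linarith
    have hda : d = -a := by linarith
    have hZs : Z = !![a, b; -b, -a] := by rw [hZeta, hcb, hda]
    have habne : a ^ 2 ≠ b ^ 2 := by
      intro h0
      apply hdet2
      rw [hcb, hda]
      linear_combination -h0
    right; right
    refine ⟨a, b, habne, ?_⟩
    rw [← hmkZ]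
    congr 1
    exact Units.ext (by rw [glOf_coe, glOf_coe, hZs])
  · -- c = -a, d = -b : contradiction
    refine absurd ?_ hdet2
    have hc : c = -a := by linarith
    have hd : d = -b := by linarith
    rw [hc, hd]; ring

lemma forward_dir (G : Subgroup PGL2) (hGfin : (G : Set PGL2).Finite)
    (hinf : ¬ (goodOrbits G).Finite) :
    ∃ a b : ℚ, a ^ 2 ≠ b ^ 2 ∧
      ∀ σ ∈ G, ∃ g : GL (Fin 2) ℚ, (QuotientGroup.mk g : PGL2) = σ ∧
        ((g : Matrix (Fin 2) (Fin 2) ℚ) = 1 ∨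
         (g : Matrix (Fin 2) (Fin 2) ℚ) = !![0, 1; 1, 0] ∨
         (g : Matrix (Fin 2) (Fin 2) ℚ) = !![a, b; -b, -a] ∨
         (g : Matrix (Fin 2) (Fin 2) ℚ) = !![b, a; -a, -b]) := by
  set U := ⋃₀ goodOrbits G with hUdef
  have hUinf : U.Infinite := by
    refine fun hU => hinf ?_
    exact hU.finite_subsets.subset (fun O hO => Set.subset_sUnion_of_mem hO)
  have hUgood : ∀ y ∈ U, y = ((0 : ℂ) : OnePoint ℂ) ∨
      ∃ z : ℂ, y = (z : OnePoint ℂ) ∧ ‖z‖ = 1 := by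
    rintro y ⟨O, hO, hyO⟩
    exact hO.2 y hyO
  have hUcl : ∀ σ ∈ G, ∀ y ∈ U, pglApply σ y ∈ U := by
    rintro σ hσ y ⟨O, hO, hyO⟩
    obtain ⟨x, rfl⟩ := hO.1
    obtain ⟨τ, hτ, hτx⟩ := hyO
    exact ⟨pglOrbit G x, hO, ⟨σ * τ, mul_mem hσ hτ, by rw [pglApply_mul, hτx]⟩⟩
  set T := {z : ℂ | ‖z‖ = 1 ∧ (z : OnePoint ℂ) ∈ U} with hTdef
  have hTinf : T.Infinite := by
    intro hTf
    apply hUinf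
    apply Set.Finite.subset ((hTf.image (fun z : ℂ => (z : OnePoint ℂ))).insert
      ((0 : ℂ) : OnePoint ℂ))
    intro y hy
    rcases hUgood y hy with h0 | ⟨z, rfl, hz⟩
    · rw [h0]; exact Set.mem_insert _ _
    · exact Set.mem_insert_of_mem _ ⟨z, ⟨hz, hy⟩, rfl⟩
  have hcls : ∀ σ ∈ G, σ = 1 ∨
      σ = QuotientGroup.mk (glOf !![0, 1; 1, 0] detJ) ∨
      (∃ a b : ℚ, ∃ hab : a ^ 2 ≠ b ^ 2,
        σ = QuotientGroup.mk (glOf !![a, b; -b, -a] (detA_ne_zero hab))) := by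
    intro σ hσ
    refine classify hGfin hσ hTinf (fun z hz => hz.1) ?_
    intro z hz
    have hmem := hUcl σ hσ (z : OnePoint ℂ) hz.2
    rcases hUgood _ hmem with h | ⟨w, hw, hw1⟩
    · exact Or.inl h
    · exact Or.inr ⟨w, hw, hw1⟩
  by_cases hex : ∃ σ₀ ∈ G, ∃ a₀ b₀ : ℚ, ∃ h₀ : a₀ ^ 2 ≠ b₀ ^ 2,
      σ₀ = QuotientGroup.mk (glOf !![a₀, b₀; -b₀, -a₀] (detA_ne_zero h₀))
  · obtain ⟨σ₀, hσ₀G, a₀, b₀, hab₀, hσ₀⟩ := hex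
    refine ⟨a₀, b₀, hab₀, ?_⟩
    intro σ hσ
    rcases hcls σ hσ with h1 | hJ | ⟨a', b', hab', hA'⟩
    · exact ⟨1, (QuotientGroup.mk_one _).trans h1.symm, Or.inl Units.val_one⟩
    · exact ⟨glOf !![0, 1; 1, 0] detJ, hJ.symm, Or.inr (Or.inl rfl)⟩
    · have hτG : σ * σ₀ ∈ G := mul_mem hσ hσ₀G
      have hmulmat : (!![a', b'; -b', -a'] : Matrix (Fin 2) (Fin 2) ℚ) *
          !![a₀, b₀; -b₀, -a₀] =
          !![a' * a₀ - b' * b₀, a' * b₀ - a₀ * b';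
             a' * b₀ - a₀ * b', a' * a₀ - b' * b₀] := by
        apply Matrix.ext
        intro i j
        fin_cases i <;> fin_cases j <;>
          simp [Matrix.mul_apply, Fin.sum_univ_two] <;> ring
      have hdp : (!![a' * a₀ - b' * b₀, a' * b₀ - a₀ * b';
          a' * b₀ - a₀ * b', a' * a₀ - b' * b₀] : Matrix (Fin 2) (Fin 2) ℚ).det ≠ 0 := by
        rw [← hmulmat, Matrix.det_mul]
        exact mul_ne_zero (detA_ne_zero hab') (detA_ne_zero hab₀)
      have hmkτ : (QuotientGroup.mk (glOf _ hdp) : PGL2) = σ * σ₀ := by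
        have hgl : glOf _ hdp =
            glOf !![a', b'; -b', -a'] (detA_ne_zero hab') *
            glOf !![a₀, b₀; -b₀, -a₀] (detA_ne_zero hab₀) := by
          apply Units.ext
          exact hmulmat.symm
        rw [hgl, QuotientGroup.mk_mul, ← hA', ← hσ₀]
      have hpq := symm_mat_ab_zero hGfin hτG hdp hmkτ
      have hA'ne : ¬(a' = 0 ∧ b' = 0) := by
        rintro ⟨h1, h2⟩
        exact hab' (by rw [h1, h2])
      rcases mul_eq_zero.mp hpq with hp | hq
      · -- p = 0 : σ is the B-type class
        have h00 : ¬(b₀ = 0 ∧ a₀ = 0) := by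
          rintro ⟨h1, h2⟩
          exact hab₀ (by rw [h1, h2])
        obtain ⟨l, hl1, hl2⟩ := prop_of_cross (u := b₀) (v := a₀) h00 (x := a') (y := b')
          (by linear_combination hp)
        have hl0 : l ≠ 0 := by
          rintro rfl
          rw [zero_mul] at hl1 hl2
          exact hA'ne ⟨hl1, hl2⟩
        have hsm : (!![a', b'; -b', -a'] : Matrix (Fin 2) (Fin 2) ℚ) =
            l • !![b₀, a₀; -a₀, -b₀] := by
          rw [hl1, hl2]
          apply Matrix.ext
          intro i j
          fin_cases i <;> fin_cases j <;> simp [Matrix.smul_apply] <;> ring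
        have hdsm : ((l • !![b₀, a₀; -a₀, -b₀] : Matrix (Fin 2) (Fin 2) ℚ)).det ≠ 0 :=
          hsm ▸ detA_ne_zero hab'
        refine ⟨glOf !![b₀, a₀; -a₀, -b₀] (detA_ne_zero (Ne.symm hab₀)), ?_,
          Or.inr (Or.inr (Or.inr rfl))⟩
        rw [← mk_glOf_smul (detA_ne_zero (Ne.symm hab₀)) hl0 hdsm, hA']
        congr 1
        apply Units.ext
        exact hsm.symm
      · -- q = 0 : σ is the A-type class
        obtain ⟨l, hl1, hl2⟩ := prop_of_cross (u := a₀) (v := b₀)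
          (fun h => hab₀ (by rw [h.1, h.2])) (x := a') (y := b')
          (by linear_combination hq)
        have hl0 : l ≠ 0 := by
          rintro rfl
          rw [zero_mul] at hl1 hl2
          exact hA'ne ⟨hl1, hl2⟩
        have hsm : (!![a', b'; -b', -a'] : Matrix (Fin 2) (Fin 2) ℚ) =
            l • !![a₀, b₀; -b₀, -a₀] := by
          rw [hl1, hl2]
          apply Matrix.ext
          intro i j
          fin_cases i <;> fin_cases j <;> simp [Matrix.smul_apply] <;> ring
        have hdsm : ((l • !![a₀, b₀; -b₀, -a₀] : Matrix (Fin 2) (Fin 2) ℚ)).det ≠ 0 :=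
          hsm ▸ detA_ne_zero hab'
        refine ⟨glOf !![a₀, b₀; -b₀, -a₀] (detA_ne_zero hab₀), ?_,
          Or.inr (Or.inr (Or.inl rfl))⟩
        rw [← mk_glOf_smul (detA_ne_zero hab₀) hl0 hdsm, hA']
        congr 1
        apply Units.ext
        exact hsm.symm
  · refine ⟨1, 0, by norm_num, ?_⟩
    intro σ hσ
    rcases hcls σ hσ with h1 | hJ | hA
    · exact ⟨1, (QuotientGroup.mk_one _).trans h1.symm, Or.inl Units.val_one⟩
    · exact ⟨glOf !![0, 1; 1, 0] detJ, hJ.symm, Or.inr (Or.inl rfl)⟩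
    · obtain ⟨a', b', hab', hA'⟩ := hA
      exact absurd ⟨σ, hσ, a', b', hab', hA'⟩ hex

/-- **Corollary.** For a finite `G ≤ PGL₂(ℚ)`, the set `𝒪` is infinite if and only if
there are `a, b ∈ ℚ` with `a² ≠ b²` such that `G` is contained in the (subgroup given by
the) images in `PGL₂(ℚ)` of the four matrices `I, (0 1; 1 0), (a b; -b -a), (b a; -a -b)`. -/
theorem goodOrbits_infinite_iff (G : Subgroup PGL2) (hGfin : (G : Set PGL2).Finite) :
    ¬ (goodOrbits G).Finite ↔
      ∃ a b : ℚ, a ^ 2 ≠ b ^ 2 ∧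
        ∀ σ ∈ G, ∃ g : GL (Fin 2) ℚ, (QuotientGroup.mk g : PGL2) = σ ∧
          ((g : Matrix (Fin 2) (Fin 2) ℚ) = 1 ∨
           (g : Matrix (Fin 2) (Fin 2) ℚ) = !![0, 1; 1, 0] ∨
           (g : Matrix (Fin 2) (Fin 2) ℚ) = !![a, b; -b, -a] ∨
           (g : Matrix (Fin 2) (Fin 2) ℚ) = !![b, a; -a, -b]) := ⟨forward_dir G hGfin, backward_dir G hGfin⟩
end

section
/- Let a, b, a', b' ∈ ℚ with a² ≠ b² and a'² ≠ b'². Then the image in PGL₂(ℚ) of the matrix product (a b; −b −a)·(a' b'; −b' −a') has finite order if and only if ab' = ba' or aa' = bb'. -/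
lemma scalar_mem_center_s7 (g : GL (Fin 2) ℚ) (c : ℚ)
    (hgc : (g : Matrix (Fin 2) (Fin 2) ℚ) = c • 1) : g ∈ Subgroup.center (GL (Fin 2) ℚ) := by
  rw [Subgroup.mem_center_iff]
  intro h
  ext : 1
  show (h : Matrix (Fin 2) (Fin 2) ℚ) * g = (g : Matrix (Fin 2) (Fin 2) ℚ) * h
  rw [hgc]
  simp [Matrix.mul_smul, Matrix.smul_mul]

lemma center_scalar (g : GL (Fin 2) ℚ) (hgm : g ∈ Subgroup.center (GL (Fin 2) ℚ)) :
    ∃ c : ℚ, (g : Matrix (Fin 2) (Fin 2) ℚ) = c • 1 := by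
  rw [Subgroup.mem_center_iff] at hgm
  have hA : IsUnit (!![1, 1; 0, 1] : Matrix (Fin 2) (Fin 2) ℚ) := by
    rw [Matrix.isUnit_iff_isUnit_det]; norm_num [Matrix.det_fin_two_of]
  have hB : IsUnit (!![1, 0; 1, 1] : Matrix (Fin 2) (Fin 2) ℚ) := by
    rw [Matrix.isUnit_iff_isUnit_det]; norm_num [Matrix.det_fin_two_of]
  set N : Matrix (Fin 2) (Fin 2) ℚ := (g : Matrix (Fin 2) (Fin 2) ℚ) with hN
  have hcA : !![1, 1; 0, 1] * N = N * !![1, 1; 0, 1] := by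
    have := hgm hA.unit
    have := congrArg (Units.val) this
    simpa [hA.unit_spec] using this
  have hcB : !![1, 0; 1, 1] * N = N * !![1, 0; 1, 1] := by
    have := hgm hB.unit
    have := congrArg (Units.val) this
    simpa [hB.unit_spec] using this
  rw [Matrix.eta_fin_two N] at hcA hcB
  rw [Matrix.mul_fin_two, Matrix.mul_fin_two] at hcA hcB
  have e1 := congrFun (congrFun hcA 0) 0
  have e2 := congrFun (congrFun hcA 0) 1
  have e3 := congrFun (congrFun hcA 1) 0
  have e4 := congrFun (congrFun hcB 0) 0
  simp [Matrix.cons_val_zero, Matrix.cons_val_one] at e1 e2 e3 e4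
  refine ⟨N 0 0, ?_⟩
  rw [Matrix.eta_fin_two N]
  have h10 : N 1 0 = 0 := by linarith
  have h01 : N 0 1 = 0 := by linarith
  have h11 : N 1 1 = N 0 0 := by linarith
  rw [h10, h01, h11]
  ext i j
  fin_cases i <;> fin_cases j <;> simp [Matrix.one_apply]

lemma mulVec_pow (N : Matrix (Fin 2) (Fin 2) ℚ) (v : Fin 2 → ℚ) (r : ℚ)
    (hv : N.mulVec v = r • v) (n : ℕ) : (N ^ n).mulVec v = r ^ n • v := by
  induction n with
  | zero => simp
  | succ n ih =>
      rw [pow_succ, ← Matrix.mulVec_mulVec, hv, Matrix.mulVec_smul, ih, smul_smul, ← pow_succ']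

/-- The image in `PGL₂(ℚ)` of the product `(a b; -b -a)·(a' b'; -b' -a')` has finite order
if and only if `ab' = ba'` or `aa' = bb'`. -/
theorem isOfFinOrder_mk_mul_iff (a b a' b' : ℚ) (h : a ^ 2 ≠ b ^ 2) (h' : a' ^ 2 ≠ b' ^ 2)
    (g : GL (Fin 2) ℚ)
    (hg : (g : Matrix (Fin 2) (Fin 2) ℚ) = !![a, b; -b, -a] * !![a', b'; -b', -a']) :
    IsOfFinOrder (QuotientGroup.mk g : PGL2) ↔ a * b' = b * a' ∨ a * a' = b * b' := by
  set p : ℚ := a * a' - b * b' with hp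
  set q : ℚ := a * b' - b * a' with hq
  have hgpq : (g : Matrix (Fin 2) (Fin 2) ℚ) = !![p, q; q, p] := by
    rw [hg, Matrix.mul_fin_two]
    congr 1 <;> ring_nf
    all_goals (simp only [hp, hq] <;> ring_nf)
  have hprod : (p + q) * (p - q) = (a ^ 2 - b ^ 2) * (a' ^ 2 - b' ^ 2) := by
    rw [hp, hq]; ring
  have hne : (p + q) * (p - q) ≠ 0 := by
    rw [hprod]
    exact mul_ne_zero (sub_ne_zero.mpr h) (sub_ne_zero.mpr h')
  have hpq1 : p + q ≠ 0 := left_ne_zero_of_mul hne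
  have hpq2 : p - q ≠ 0 := right_ne_zero_of_mul hne
  constructor
  · intro hfin
    obtain ⟨n, hn, hpow⟩ := isOfFinOrder_iff_pow_eq_one.mp hfin
    rw [← QuotientGroup.mk_pow, QuotientGroup.eq_one_iff] at hpow
    obtain ⟨c, hc⟩ := center_scalar _ hpow
    have hcmat : ((g : Matrix (Fin 2) (Fin 2) ℚ)) ^ n = c • 1 := by
      rw [← Units.val_pow_eq_pow_val]; exact hc
    have hv1 : (g : Matrix (Fin 2) (Fin 2) ℚ).mulVec ![1, 1] = (p + q) • ![1, 1] := by
      rw [hgpq]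
      ext i
      fin_cases i <;> simp [Matrix.mulVec, dotProduct, Fin.sum_univ_two] <;> ring
    have hv2 : (g : Matrix (Fin 2) (Fin 2) ℚ).mulVec ![1, -1] = (p - q) • ![1, -1] := by
      rw [hgpq]
      ext i
      fin_cases i <;> simp [Matrix.mulVec, dotProduct, Fin.sum_univ_two] <;> ring
    have e1 := mulVec_pow _ _ _ hv1 n
    have e2 := mulVec_pow _ _ _ hv2 n
    rw [hcmat] at e1 e2
    have c1 : c = (p + q) ^ n := by
      have := congrFun e1 0
      simpa [Matrix.smul_mulVec, Matrix.one_mulVec] using this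
    have c2 : c = (p - q) ^ n := by
      have := congrFun e2 0
      simpa [Matrix.smul_mulVec, Matrix.one_mulVec] using this
    have hr : ((p + q) / (p - q)) ^ n = 1 := by
      rw [div_pow, ← c1, c2, div_self (pow_ne_zero _ hpq2)]
    rcases (pow_eq_one_iff_of_ne_zero hn.ne').mp hr with h1 | ⟨h1, _⟩
    · have : p + q = p - q := by
        field_simp at h1; linarith
      left; linarith
    · have : p + q = -(p - q) := by
        rw [div_eq_iff hpq2] at h1; linarith
      right; linarith
  · rintro (hcase | hcase)
    · have hq0 : q = 0 := by rw [hq]; linarith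
      apply isOfFinOrder_iff_pow_eq_one.mpr ⟨1, one_pos, ?_⟩
      rw [pow_one, QuotientGroup.eq_one_iff]
      apply scalar_mem_center_s7 g p
      rw [hgpq, hq0]
      ext i j
      fin_cases i <;> fin_cases j <;> simp [Matrix.one_apply]
    · have hp0 : p = 0 := by rw [hp]; linarith
      apply isOfFinOrder_iff_pow_eq_one.mpr ⟨2, two_pos, ?_⟩
      rw [← QuotientGroup.mk_pow, QuotientGroup.eq_one_iff]
      apply scalar_mem_center_s7 _ (q * q)
      rw [Units.val_pow_eq_pow_val, hgpq, hp0, pow_two, Matrix.mul_fin_two]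
      ext i j
      fin_cases i <;> fin_cases j <;> simp [Matrix.one_apply]
end
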